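/- Every search game with solitary-search dominant payoffs admits a location-maximizing pure Nash equilibrium, i.e., an equilibrium s such that for every pure profile s', the number of locations ω with m_s(ω) ≥ 1 is at least the number with m_{s'}(ω) ≥ 1. -/

import Mathlib

open scoped Classical
noncomputable section

variable {N Ω : Type}

/-- `P` is a partition of the finite type `Ω` into nonempty, pairwise disjoint cells. -/
def IsPartition [Fintype Ω] [DecidableEq Ω] (P : Finset (Finset Ω)) : Prop :=
  (∀ π ∈ P, π.Nonempty) ∧
  (∀ π ∈ P, ∀ π' ∈ P, π ≠ π' → Disjoint π π') ∧
  (∀ ω : Ω, ∃ π ∈ P, ω ∈ π)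

/-- `f` is a valid strategy for player `i`: in every cell it searches a subset of
the cell of size at most the capacity `K i`. -/
def ValidFor [DecidableEq Ω] (Part : N → Finset (Finset Ω)) (K : N → ℕ) (i : N)
    (f : Finset Ω → Finset Ω) : Prop :=
  ∀ π ∈ Part i, f π ⊆ π ∧ (f π).card ≤ K i

/-- A valid pure strategy profile. -/
def ValidStrat [DecidableEq Ω] (Part : N → Finset (Finset Ω)) (K : N → ℕ)
    (s : N → Finset Ω → Finset Ω) : Prop :=
  ∀ i, ValidFor Part K i (s i)

/-- Player `i` searches location `ω` under profile `s` (when the prize is at `ω`). -/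
def searchesAt (Part : N → Finset (Finset Ω)) (s : N → Finset Ω → Finset Ω)
    (i : N) (ω : Ω) : Prop :=
  ∃ π ∈ Part i, ω ∈ π ∧ ω ∈ s i π

/-- Location `ω` is searched by some player under profile `s`. -/
def searched (Part : N → Finset (Finset Ω)) (s : N → Finset Ω → Finset Ω)
    (ω : Ω) : Prop :=
  ∃ i, searchesAt Part s i ω

/-- The number of players searching `ω` under `s`. -/
def mcount [Fintype N] (Part : N → Finset (Finset Ω))
    (s : N → Finset Ω → Finset Ω) (ω : Ω) : ℕ :=
  (Finset.univ.filter fun i => searchesAt Part s i ω).card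


noncomputable section

/-- Expected payoff of player `i` under profile `s`: for each location `ω`
(weighted by the prior `μ`), the reward `v i m ω` if `i` searches `ω` when `m`
players search there, minus the search cost `c i k` for searching `k` locations
in the realized cell. -/
def payoff {N Ω : Type} [Fintype N] [Fintype Ω] [DecidableEq Ω]
    (Part : N → Finset (Finset Ω)) (μ : Ω → ℝ) (c : N → ℕ → ℝ)
    (v : N → ℕ → Ω → ℝ) (i : N) (s : N → Finset Ω → Finset Ω) : ℝ :=
  ∑ ω : Ω, μ ω *
    ((if searchesAt Part s i ω then v i (mcount Part s ω) ω else 0)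
      - ∑ π ∈ (Part i).filter (fun π => ω ∈ π), c i ((s i π).card))

/-- A (pure Bayesian) Nash equilibrium: a valid profile from which no player
has a profitable unilateral deviation to another valid strategy. -/
def IsNash {N Ω : Type} [Fintype N] [DecidableEq N] [Fintype Ω] [DecidableEq Ω]
    (Part : N → Finset (Finset Ω)) (K : N → ℕ) (μ : Ω → ℝ) (c : N → ℕ → ℝ)
    (v : N → ℕ → Ω → ℝ) (s : N → Finset Ω → Finset Ω) : Prop :=
  ValidStrat Part K s ∧
  ∀ (i : N) (t : Finset Ω → Finset Ω), ValidFor Part K i t →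
    payoff Part μ c v i (Function.update s i t) ≤ payoff Part μ c v i s

end



noncomputable section
namespace SGaux

variable {Ω : Type} [DecidableEq Ω]

lemma delta_mono (g : ℕ → ℝ) (hg : ∀ k, g (k+1) - g k ≤ g (k+2) - g (k+1)) :
    ∀ {j k : ℕ}, j ≤ k → g (j+1) - g j ≤ g (k+1) - g k := by
  intro j k h
  induction h with
  | refl => exact le_refl _
  | step _ ih => exact le_trans ih (hg _)

lemma telescope_hi (g : ℕ → ℝ) (hg : ∀ k, g (k+1) - g k ≤ g (k+2) - g (k+1)) :
    ∀ {k m : ℕ}, k ≤ m → ((m - k : ℕ) : ℝ) * (g (k+1) - g k) ≤ g m - g k := by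
  intro k m h
  induction h with
  | refl => simp
  | @step m h ih =>
      have h1 : g (k+1) - g k ≤ g (m+1) - g m := delta_mono g hg h
      have hc : ((m + 1 - k : ℕ) : ℝ) = ((m - k : ℕ) : ℝ) + 1 := by
        have h2 : m + 1 - k = (m - k) + 1 := Nat.succ_sub h
        rw [h2]; push_cast; ring
      rw [hc]
      nlinarith [ih]

lemma telescope_lo_aux (g : ℕ → ℝ) (hg : ∀ k, g (k+1) - g k ≤ g (k+2) - g (k+1)) :
    ∀ (d m : ℕ), g (m + d) - g m ≤ (d : ℝ) * (g (m + d) - g (m + d - 1)) := by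
  intro d
  induction d with
  | zero => intro m; simp
  | succ d ih =>
      intro m
      rcases Nat.eq_zero_or_pos d with hd | hd
      · subst hd; simp
      · have h1 := ih m
        have h2 : g (m + d) - g (m + d - 1) ≤ g (m + d + 1) - g (m + d) := by
          obtain ⟨e, he⟩ : ∃ e, m + d = e + 1 := ⟨m + d - 1, by omega⟩
          rw [he]
          have := delta_mono g hg (show e ≤ e + 1 by omega)
          simpa using this
        have hsum : g (m + (d+1)) - g m =
            (g (m + d + 1) - g (m + d)) + (g (m + d) - g m) := by
          have : m + (d + 1) = m + d + 1 := by omega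
          rw [this]; ring
        have hfin : m + (d + 1) - 1 = m + d := by omega
        rw [hsum, hfin]
        have : m + (d + 1) = m + d + 1 := by omega
        rw [this]
        push_cast
        nlinarith [h1, h2]

lemma telescope_lo (g : ℕ → ℝ) (hg : ∀ k, g (k+1) - g k ≤ g (k+2) - g (k+1)) :
    ∀ {m k : ℕ}, m ≤ k → g k - g m ≤ ((k - m : ℕ) : ℝ) * (g k - g (k-1)) := by
  intro m k h
  have := telescope_lo_aux g hg (k - m) m
  have hmk : m + (k - m) = k := by omega
  rw [hmk] at this
  exact this

end SGaux

namespace SGaux2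
open SGaux
variable {Ω : Type} [DecidableEq Ω]

lemma sum_le_sum_of_dom (X Y : Finset Ω) (b : Ω → ℝ) (hcard : X.card = Y.card)
    (h : ∀ x ∈ X, ∀ y ∈ Y, b x ≤ b y) : ∑ x ∈ X, b x ≤ ∑ y ∈ Y, b y := by
  rcases X.eq_empty_or_nonempty with rfl | hX
  · have hY : Y = ∅ := Finset.card_eq_zero.mp (by simpa using hcard.symm)
    simp [hY]
  · have hY : Y.Nonempty := Finset.card_pos.mp (hcard ▸ Finset.card_pos.mpr hX)
    obtain ⟨y0, hy0Y, hy0⟩ := Y.exists_min_image b hY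
    calc ∑ x ∈ X, b x ≤ X.card • b y0 :=
          Finset.sum_le_card_nsmul X b (b y0) (fun x hx => h x hx y0 hy0Y)
      _ = Y.card • b y0 := by rw [hcard]
      _ ≤ ∑ y ∈ Y, b y := Finset.card_nsmul_le_sum Y b (b y0) (fun y hy => hy0 y hy)

lemma locg (π S : Finset Ω) (b : Ω → ℝ) (g : ℕ → ℝ) (κ : ℕ)
    (hg : ∀ k, g (k+1) - g k ≤ g (k+2) - g (k+1))
    (hS : S ⊆ π) (hcard : S.card ≤ κ)
    (L1 : ∀ u ∈ S, g S.card - g (S.card - 1) ≤ b u)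
    (L2 : S.card < κ → ∀ w ∈ π, w ∉ S → b w ≤ g (S.card + 1) - g S.card)
    (L3 : ∀ u ∈ S, ∀ w ∈ π, w ∉ S → b w ≤ b u)
    (T : Finset Ω) (hT : T ⊆ π) (hTcard : T.card ≤ κ) :
    ∑ ω ∈ T, b ω - g T.card ≤ ∑ ω ∈ S, b ω - g S.card := by
  classical
  set A := S \ T with hA
  set B := T \ S with hB
  have hsplitS : ∑ ω ∈ A, b ω + ∑ ω ∈ S ∩ T, b ω = ∑ ω ∈ S, b ω := by
    rw [hA]
    rw [← Finset.sdiff_inter_self_left S T]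
    exact Finset.sum_sdiff (Finset.inter_subset_left)
  have hsplitT : ∑ ω ∈ B, b ω + ∑ ω ∈ S ∩ T, b ω = ∑ ω ∈ T, b ω := by
    rw [hB]
    have h1 : T \ S = T \ (T ∩ S) := (Finset.sdiff_inter_self_left T S).symm
    have h2 : S ∩ T = T ∩ S := Finset.inter_comm S T
    rw [h1, h2]
    exact Finset.sum_sdiff (Finset.inter_subset_left)
  have hcardS : A.card + (S ∩ T).card = S.card := by
    rw [hA]; exact Finset.card_sdiff_add_card_inter S T
  have hcardT : B.card + (S ∩ T).card = T.card := by
    rw [hB, Finset.inter_comm]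
    exact Finset.card_sdiff_add_card_inter T S
  rcases le_or_gt T.card S.card with hmk | hmk
  · -- T smaller or equal
    have hBA : B.card ≤ A.card := by omega
    obtain ⟨A', hA'sub, hA'card⟩ := Finset.exists_subset_card_eq hBA
    have hsum1 : ∑ ω ∈ B, b ω ≤ ∑ ω ∈ A', b ω := by
      apply sum_le_sum_of_dom B A' b (by omega)
      intro x hx y hy
      have hxT : x ∈ T := (Finset.mem_sdiff.mp hx).1
      have hxS : x ∉ S := (Finset.mem_sdiff.mp hx).2
      have hyS : y ∈ S := (Finset.mem_sdiff.mp (hA'sub hy)).1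
      exact L3 y hyS x (hT hxT) hxS
    have hsum2 : ∑ ω ∈ A \ A', b ω + ∑ ω ∈ A', b ω = ∑ ω ∈ A, b ω :=
      Finset.sum_sdiff hA'sub
    have hcardAA' : (A \ A').card = S.card - T.card := by
      rw [Finset.card_sdiff_of_subset hA'sub]; omega
    have hlow : ((A \ A').card : ℝ) * (g S.card - g (S.card - 1)) ≤ ∑ ω ∈ A \ A', b ω := by
      have := Finset.card_nsmul_le_sum (A \ A') b (g S.card - g (S.card - 1))
        (fun x hx => L1 x (Finset.mem_sdiff.mp ((Finset.mem_sdiff.mp hx).1)).1)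
      simpa [nsmul_eq_mul] using this
    have htel : g S.card - g T.card ≤ ((S.card - T.card : ℕ) : ℝ) * (g S.card - g (S.card - 1)) :=
      telescope_lo g hg hmk
    rw [hcardAA'] at hlow
    linarith [hsum1, hsum2, hsplitS, hsplitT, hlow, htel]
  · -- T larger
    have hκ : S.card < κ := lt_of_lt_of_le hmk hTcard
    have hAB : A.card ≤ B.card := by omega
    obtain ⟨B', hB'sub, hB'card⟩ := Finset.exists_subset_card_eq hAB
    have hsum1 : ∑ ω ∈ B', b ω ≤ ∑ ω ∈ A, b ω := by
      apply sum_le_sum_of_dom B' A b (by omega)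
      intro x hx y hy
      have hxB : x ∈ B := hB'sub hx
      have hxT : x ∈ T := (Finset.mem_sdiff.mp hxB).1
      have hxS : x ∉ S := (Finset.mem_sdiff.mp hxB).2
      have hyS : y ∈ S := (Finset.mem_sdiff.mp hy).1
      exact L3 y hyS x (hT hxT) hxS
    have hsum2 : ∑ ω ∈ B \ B', b ω + ∑ ω ∈ B', b ω = ∑ ω ∈ B, b ω :=
      Finset.sum_sdiff hB'sub
    have hhigh : ∑ ω ∈ B \ B', b ω ≤ ((B \ B').card : ℝ) * (g (S.card + 1) - g S.card) := by
      have := Finset.sum_le_card_nsmul (B \ B') b (g (S.card + 1) - g S.card)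
        (fun x hx => by
          have hxB : x ∈ B := (Finset.mem_sdiff.mp hx).1
          exact L2 hκ x (hT (Finset.mem_sdiff.mp hxB).1) (Finset.mem_sdiff.mp hxB).2)
      simpa [nsmul_eq_mul] using this
    have hcardBB' : (B \ B').card = T.card - S.card := by
      rw [Finset.card_sdiff_of_subset hB'sub]; omega
    have htel : ((T.card - S.card : ℕ) : ℝ) * (g (S.card + 1) - g S.card) ≤ g T.card - g S.card :=
      telescope_hi g hg (le_of_lt hmk)
    rw [hcardBB'] at hhigh
    linarith [hsum1, hsum2, hsplitS, hsplitT, hhigh, htel]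

end SGaux2

namespace SG
open Finset SGaux SGaux2

variable {N Ω : Type} [Fintype N] [DecidableEq N] [Fintype Ω] [DecidableEq Ω]
variable (Part : N → Finset (Finset Ω)) (μ : Ω → ℝ) (c : N → ℕ → ℝ) (v : N → ℕ → Ω → ℝ)

def othersAt (s : N → Finset Ω → Finset Ω) (i : N) (ω : Ω) : ℕ :=
  (Finset.univ.filter fun j => j ≠ i ∧ searchesAt Part s j ω).card

def bval (s : N → Finset Ω → Finset Ω) (i : N) (ω : Ω) : ℝ :=
  μ ω * v i (othersAt Part s i ω + 1) ω

def gc (i : N) (π : Finset Ω) (k : ℕ) : ℝ := (∑ x ∈ π, μ x) * c i k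

def cellF (s : N → Finset Ω → Finset Ω) (i : N) (π : Finset Ω) (T : Finset Ω) : ℝ :=
  (∑ ω ∈ T, bval Part μ v s i ω) - gc μ c i π T.card

variable {Part} {μ} {c} {v}

lemma cell_unique (hPart : ∀ i, IsPartition (Part i)) {i : N} {π π' : Finset Ω} {ω : Ω}
    (hπ : π ∈ Part i) (hπ' : π' ∈ Part i) (hω : ω ∈ π) (hω' : ω ∈ π') : π = π' := by
  by_contra hne
  exact (Finset.disjoint_left.mp ((hPart i).2.1 π hπ π' hπ' hne)) hω hω'

lemma searchesAt_update_ne {s : N → Finset Ω → Finset Ω} {i j : N} {t : Finset Ω → Finset Ω}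
    (hj : j ≠ i) (ω : Ω) :
    searchesAt Part (Function.update s i t) j ω ↔ searchesAt Part s j ω := by
  simp [searchesAt, Function.update_of_ne hj]

lemma othersAt_update (s : N → Finset Ω → Finset Ω) (i : N) (t : Finset Ω → Finset Ω) (ω : Ω) :
    othersAt Part (Function.update s i t) i ω = othersAt Part s i ω := by
  unfold othersAt
  congr 1
  apply Finset.filter_congr
  intro j _
  constructor
  · rintro ⟨hj, hs⟩; exact ⟨hj, (searchesAt_update_ne hj ω).mp hs⟩
  · rintro ⟨hj, hs⟩; exact ⟨hj, (searchesAt_update_ne hj ω).mpr hs⟩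

lemma mcount_split (s : N → Finset Ω → Finset Ω) (i : N) (ω : Ω) :
    mcount Part s ω = othersAt Part s i ω + (if searchesAt Part s i ω then 1 else 0) := by
  classical
  unfold mcount othersAt
  have hsplit : (Finset.univ.filter fun j => searchesAt Part s j ω) =
      (Finset.univ.filter fun j => j ≠ i ∧ searchesAt Part s j ω) ∪
      (Finset.univ.filter fun j => j = i ∧ searchesAt Part s j ω) := by
    ext j
    simp only [Finset.mem_filter, Finset.mem_union, Finset.mem_univ, true_and]
    tauto
  rw [hsplit, Finset.card_union_of_disjoint]
  · congr 1
    split_ifs with h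
    · have : (Finset.univ.filter fun j => j = i ∧ searchesAt Part s j ω) = {i} := by
        ext j
        simp only [Finset.mem_filter, Finset.mem_univ, true_and, Finset.mem_singleton]
        constructor
        · rintro ⟨rfl, _⟩; rfl
        · rintro rfl; exact ⟨rfl, h⟩
      rw [this, Finset.card_singleton]
    · have : (Finset.univ.filter fun j => j = i ∧ searchesAt Part s j ω) = ∅ := by
        apply Finset.filter_eq_empty_iff.mpr
        rintro j - ⟨rfl, hs⟩
        exact h hs
      rw [this, Finset.card_empty]
  · rw [Finset.disjoint_left]
    intro j hj hj'
    exact (Finset.mem_filter.mp hj).2.1 (Finset.mem_filter.mp hj').2.1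

lemma searchesAt_iff_mem (hPart : ∀ i, IsPartition (Part i)) {s : N → Finset Ω → Finset Ω}
    {i : N} {π : Finset Ω} {ω : Ω} (hπ : π ∈ Part i) (hω : ω ∈ π) :
    searchesAt Part s i ω ↔ ω ∈ s i π := by
  constructor
  · rintro ⟨π', hπ', hωπ', hmem⟩
    rw [cell_unique hPart hπ hπ' hω hωπ']; exact hmem
  · intro h; exact ⟨π, hπ, hω, h⟩

lemma payoff_decomp (hPart : ∀ i, IsPartition (Part i)) (s : N → Finset Ω → Finset Ω) (i : N)
    (t : Finset Ω → Finset Ω) (ht : ∀ π ∈ Part i, t π ⊆ π) :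
    payoff Part μ c v i (Function.update s i t) =
      ∑ π ∈ Part i, ((∑ ω ∈ t π, bval Part μ v s i ω) - gc μ c i π (t π).card) := by
  classical
  unfold payoff
  have hsearch : ∀ ω, searchesAt Part (Function.update s i t) i ω ↔
      ω ∈ (Part i).biUnion t := by
    intro ω
    simp only [searchesAt, Function.update_self, Finset.mem_biUnion]
    constructor
    · rintro ⟨π, hπ, _, hm⟩; exact ⟨π, hπ, hm⟩
    · rintro ⟨π, hπ, hm⟩; exact ⟨π, hπ, ht π hπ hm, hm⟩
  have hdisj : ∀ π₁ ∈ (Part i : Finset (Finset Ω)), ∀ π₂ ∈ Part i, π₁ ≠ π₂ →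
      Disjoint (t π₁) (t π₂) := by
    intro π₁ h₁ π₂ h₂ hne
    exact Finset.disjoint_of_subset_left (ht π₁ h₁)
      (Finset.disjoint_of_subset_right (ht π₂ h₂) ((hPart i).2.1 π₁ h₁ π₂ h₂ hne))
  have hmul : ∀ ω : Ω, μ ω *
      ((if searchesAt Part (Function.update s i t) i ω
          then v i (mcount Part (Function.update s i t) ω) ω else 0)
        - ∑ π ∈ (Part i).filter (fun π => ω ∈ π), c i ((Function.update s i t i π).card)) =
      (if searchesAt Part (Function.update s i t) i ω
          then μ ω * v i (mcount Part (Function.update s i t) ω) ω else 0)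
        - ∑ π ∈ (Part i).filter (fun π => ω ∈ π), μ ω * c i ((t π).card) := by
    intro ω
    rw [Function.update_self, mul_sub, Finset.mul_sum]
    congr 1
    split_ifs <;> simp
  have hre : (∑ ω : Ω, (if searchesAt Part (Function.update s i t) i ω
      then μ ω * v i (mcount Part (Function.update s i t) ω) ω else 0)) =
      ∑ π ∈ Part i, ∑ ω ∈ t π, bval Part μ v s i ω := by
    have h1 : ∀ ω : Ω, (if searchesAt Part (Function.update s i t) i ω
        then μ ω * v i (mcount Part (Function.update s i t) ω) ω else 0) =
        (if ω ∈ (Part i).biUnion t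
          then μ ω * v i (mcount Part (Function.update s i t) ω) ω else 0) := by
      intro ω; rw [if_congr (hsearch ω) rfl rfl]
    rw [Finset.sum_congr rfl (fun ω _ => h1 ω), Finset.sum_ite_mem,
      Finset.univ_inter, Finset.sum_biUnion hdisj]
    apply Finset.sum_congr rfl
    intro π hπ
    apply Finset.sum_congr rfl
    intro ω hω
    have hωπ : ω ∈ π := ht π hπ hω
    have hsea : searchesAt Part (Function.update s i t) i ω :=
      ⟨π, hπ, hωπ, by rwa [Function.update_self]⟩
    rw [mcount_split (Function.update s i t) i ω, if_pos hsea, othersAt_update]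
    rfl
  have hco : (∑ ω : Ω, ∑ π ∈ (Part i).filter (fun π => ω ∈ π), μ ω * c i ((t π).card)) =
      ∑ π ∈ Part i, gc μ c i π ((t π).card) := by
    have h2 : ∀ ω : Ω, ∑ π ∈ (Part i).filter (fun π => ω ∈ π), μ ω * c i ((t π).card) =
        ∑ π ∈ Part i, (if ω ∈ π then μ ω * c i ((t π).card) else 0) := by
      intro ω; rw [Finset.sum_filter]
    rw [Finset.sum_congr rfl (fun ω _ => h2 ω), Finset.sum_comm]
    apply Finset.sum_congr rfl
    intro π hπ
    rw [Finset.sum_ite_mem, Finset.univ_inter, ← Finset.sum_mul]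
    rfl
  calc (∑ ω : Ω, μ ω *
      ((if searchesAt Part (Function.update s i t) i ω
          then v i (mcount Part (Function.update s i t) ω) ω else 0)
        - ∑ π ∈ (Part i).filter (fun π => ω ∈ π), c i ((Function.update s i t i π).card)))
      = ∑ ω : Ω, ((if searchesAt Part (Function.update s i t) i ω
          then μ ω * v i (mcount Part (Function.update s i t) ω) ω else 0)
        - ∑ π ∈ (Part i).filter (fun π => ω ∈ π), μ ω * c i ((t π).card)) :=
        Finset.sum_congr rfl (fun ω _ => hmul ω)
    _ = (∑ ω : Ω, (if searchesAt Part (Function.update s i t) i ω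
          then μ ω * v i (mcount Part (Function.update s i t) ω) ω else 0))
        - ∑ ω : Ω, ∑ π ∈ (Part i).filter (fun π => ω ∈ π), μ ω * c i ((t π).card) :=
        Finset.sum_sub_distrib _ _
    _ = ∑ π ∈ Part i, ((∑ ω ∈ t π, bval Part μ v s i ω) - gc μ c i π (t π).card) := by
        rw [hre, hco, ← Finset.sum_sub_distrib]

lemma payoff_eq_cellSum (hPart : ∀ i, IsPartition (Part i)) (s : N → Finset Ω → Finset Ω)
    (i : N) (hs : ∀ π ∈ Part i, s i π ⊆ π) :
    payoff Part μ c v i s =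
      ∑ π ∈ Part i, ((∑ ω ∈ s i π, bval Part μ v s i ω) - gc μ c i π (s i π).card) := by
  have := payoff_decomp (μ := μ) (c := c) (v := v) hPart s i (s i) hs
  rwa [Function.update_eq_self] at this

lemma isNash_of_cellOpt (hPart : ∀ i, IsPartition (Part i)) (K : N → ℕ)
    (s : N → Finset Ω → Finset Ω) (hval : ValidStrat Part K s)
    (hopt : ∀ i, ∀ π ∈ Part i, ∀ T ⊆ π, T.card ≤ K i →
      cellF Part μ c v s i π T ≤ cellF Part μ c v s i π (s i π)) :
    IsNash Part K μ c v s := by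
  refine ⟨hval, ?_⟩
  intro i t htv
  rw [payoff_decomp (μ := μ) (c := c) (v := v) hPart s i t (fun π hπ => (htv π hπ).1),
    payoff_eq_cellSum hPart s i (fun π hπ => (hval i π hπ).1)]
  apply Finset.sum_le_sum
  intro π hπ
  exact hopt i π hπ (t π) (htv π hπ).1 (htv π hπ).2

end SG

namespace SG
open Finset SGaux SGaux2

variable {N Ω : Type} [Fintype N] [DecidableEq N] [Fintype Ω] [DecidableEq Ω]
variable {Part : N → Finset (Finset Ω)} {μ : Ω → ℝ} {c : N → ℕ → ℝ} {v : N → ℕ → Ω → ℝ}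
variable {K : N → ℕ}

section Steps

lemma musum_pos (hμ_pos : ∀ ω, 0 < μ ω) (hPart : ∀ i, IsPartition (Part i))
    {i : N} {ρ : Finset Ω} (hρ : ρ ∈ Part i) : 0 < ∑ x ∈ ρ, μ x :=
  Finset.sum_pos (fun x _ => hμ_pos x) ((hPart i).1 ρ hρ)

lemma gc_convex (hμ_pos : ∀ ω, 0 < μ ω) (hPart : ∀ i, IsPartition (Part i))
    (hc_convex : ∀ i k, c i (k + 1) - c i k ≤ c i (k + 2) - c i (k + 1))
    {i : N} {ρ : Finset Ω} (hρ : ρ ∈ Part i) :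
    ∀ k, gc μ c i ρ (k+1) - gc μ c i ρ k ≤ gc μ c i ρ (k+2) - gc μ c i ρ (k+1) := by
  intro k
  unfold gc
  have h1 := hc_convex i k
  have h2 := le_of_lt (musum_pos hμ_pos hPart hρ)
  nlinarith

lemma v_le_two (hv_dec : ∀ i m ω, v i (m + 1) ω ≤ v i m ω) (i : N) (ω : Ω) :
    ∀ m, 2 ≤ m → v i m ω ≤ v i 2 ω := by
  intro m hm
  induction m with
  | zero => omega
  | succ m ih =>
      rcases Nat.lt_or_ge m 2 with h | h
      · have : m = 1 := by omega
        subst this; exact le_refl _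
      · exact le_trans (hv_dec i m ω) (ih h)

lemma step_le (hμ_pos : ∀ ω, 0 < μ ω) (hPart : ∀ i, IsPartition (Part i))
    (hc_convex : ∀ i k, c i (k + 1) - c i k ≤ c i (k + 2) - c i (k + 1))
    (hSSD2 : ∀ i, ∀ π ∈ Part i, ∀ ω ∈ π,
      c i (K i) - c i (K i - 1) ≤ (μ ω / ∑ x ∈ π, μ x) * v i 1 ω)
    {i : N} {ρ : Finset Ω} (hρ : ρ ∈ Part i) {ω : Ω} (hω : ω ∈ ρ)
    {k : ℕ} (hk1 : 1 ≤ k) (hk2 : k ≤ K i) :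
    gc μ c i ρ k - gc μ c i ρ (k - 1) ≤ μ ω * v i 1 ω := by
  have hpos := musum_pos hμ_pos hPart hρ
  obtain ⟨k', rfl⟩ : ∃ k', k = k' + 1 := ⟨k - 1, by omega⟩
  obtain ⟨K', hK'⟩ : ∃ K', K i = K' + 1 := ⟨K i - 1, by omega⟩
  have h1 : c i (k' + 1) - c i k' ≤ c i (K i) - c i (K i - 1) := by
    rw [hK']
    simpa using delta_mono (c i) (hc_convex i) (show k' ≤ K' by omega)
  have h2 := hSSD2 i ρ hρ ω hω
  have h3 : (∑ x ∈ ρ, μ x) * ((μ ω / ∑ x ∈ ρ, μ x) * v i 1 ω) = μ ω * v i 1 ω := by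
    field_simp
  have h4 : gc μ c i ρ (k' + 1) - gc μ c i ρ (k' + 1 - 1) =
      (∑ x ∈ ρ, μ x) * (c i (k' + 1) - c i k') := by
    unfold gc; simp; ring
  rw [h4, ← h3]
  apply mul_le_mul_of_nonneg_left _ (le_of_lt hpos)
  exact le_trans h1 h2

lemma ssd1' (hμ_pos : ∀ ω, 0 < μ ω) (hPart : ∀ i, IsPartition (Part i))
    (hv_dec : ∀ i m ω, v i (m + 1) ω ≤ v i m ω)
    (hSSD1 : ∀ i, ∀ π ∈ Part i, ∀ ω ∈ π, ∀ ω' ∈ π,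
      (μ ω' / ∑ x ∈ π, μ x) * v i 2 ω' ≤ (μ ω / ∑ x ∈ π, μ x) * v i 1 ω)
    {i : N} {ρ : Finset Ω} (hρ : ρ ∈ Part i) {ω ω' : Ω} (hω : ω ∈ ρ) (hω' : ω' ∈ ρ)
    {m : ℕ} (hm : 2 ≤ m) :
    μ ω' * v i m ω' ≤ μ ω * v i 1 ω := by
  have hpos := musum_pos hμ_pos hPart hρ
  have h0 : μ ω' * v i m ω' ≤ μ ω' * v i 2 ω' :=
    mul_le_mul_of_nonneg_left (v_le_two hv_dec i ω' m hm) (le_of_lt (hμ_pos ω'))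
  have h1 := hSSD1 i ρ hρ ω hω ω' hω'
  have h2 : (∑ x ∈ ρ, μ x) * ((μ ω' / ∑ x ∈ ρ, μ x) * v i 2 ω') = μ ω' * v i 2 ω' := by
    field_simp
  have h3 : (∑ x ∈ ρ, μ x) * ((μ ω / ∑ x ∈ ρ, μ x) * v i 1 ω) = μ ω * v i 1 ω := by
    field_simp
  have h4 : μ ω' * v i 2 ω' ≤ μ ω * v i 1 ω := by
    rw [← h2, ← h3]
    exact mul_le_mul_of_nonneg_left h1 (le_of_lt hpos)
  linarith

end Steps

section NEk

variable (Part μ c v)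

/-- validity for generalized (per-cell) capacities -/
def Vald (κ : N → Finset Ω → ℕ) (s : N → Finset Ω → Finset Ω) : Prop :=
  ∀ i, ∀ π ∈ Part i, s i π ⊆ π ∧ (s i π).card ≤ κ i π

/-- internal equilibrium notion: valid + per-cell optimality -/
def NEk (κ : N → Finset Ω → ℕ) (s : N → Finset Ω → Finset Ω) : Prop :=
  Vald Part κ s ∧
  ∀ i, ∀ π ∈ Part i, ∀ T ⊆ π, T.card ≤ κ i π →
    cellF Part μ c v s i π T ≤ cellF Part μ c v s i π (s i π)

def countP (s : N → Finset Ω → Finset Ω) : ℕ :=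
  ((Finset.univ : Finset Ω).filter fun ω => 1 ≤ mcount Part s ω).card

end NEk

-- local conditions from optimality
lemma locOfOpt {κq : ℕ} {i : N} {ρ : Finset Ω} {s : N → Finset Ω → Finset Ω}
    (hsub : s i ρ ⊆ ρ) (hcard : (s i ρ).card ≤ κq)
    (hopt : ∀ T ⊆ ρ, T.card ≤ κq → cellF Part μ c v s i ρ T ≤ cellF Part μ c v s i ρ (s i ρ)) :
    (∀ u ∈ s i ρ, gc μ c i ρ (s i ρ).card - gc μ c i ρ ((s i ρ).card - 1) ≤ bval Part μ v s i u) ∧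
    ((s i ρ).card < κq → ∀ w ∈ ρ, w ∉ s i ρ →
      bval Part μ v s i w ≤ gc μ c i ρ ((s i ρ).card + 1) - gc μ c i ρ (s i ρ).card) ∧
    (∀ u ∈ s i ρ, ∀ w ∈ ρ, w ∉ s i ρ → bval Part μ v s i w ≤ bval Part μ v s i u) := by
  set S := s i ρ with hS
  refine ⟨?_, ?_, ?_⟩
  · intro u hu
    have h := hopt (S.erase u) (le_trans (Finset.erase_subset u S) hsub)
      (le_trans (Finset.card_le_card (Finset.erase_subset u S)) hcard)
    unfold cellF at h
    rw [Finset.card_erase_of_mem hu] at h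
    have hsum : ∑ ω ∈ S.erase u, bval Part μ v s i ω =
        (∑ ω ∈ S, bval Part μ v s i ω) - bval Part μ v s i u := by
      rw [← Finset.sum_erase_add S _ hu]; ring
    rw [hsum] at h
    linarith
  · intro hlt w hw hwS
    have hins : (insert w S) ⊆ ρ := Finset.insert_subset hw hsub
    have hc : (insert w S).card = S.card + 1 := Finset.card_insert_of_notMem hwS
    have h := hopt (insert w S) hins (by omega)
    unfold cellF at h
    rw [hc, Finset.sum_insert hwS] at h
    linarith
  · intro u hu w hw hwS
    have hwe : w ∉ S.erase u := fun hmem => hwS (Finset.mem_of_mem_erase hmem)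
    have hins : insert w (S.erase u) ⊆ ρ :=
      Finset.insert_subset hw (le_trans (Finset.erase_subset u S) hsub)
    have hc : (insert w (S.erase u)).card = S.card := by
      rw [Finset.card_insert_of_notMem hwe, Finset.card_erase_of_mem hu]
      have : 1 ≤ S.card := Finset.card_pos.mpr ⟨u, hu⟩
      omega
    have h := hopt (insert w (S.erase u)) hins (by omega)
    unfold cellF at h
    rw [hc, Finset.sum_insert hwe] at h
    have hsum : ∑ ω ∈ S.erase u, bval Part μ v s i ω =
        (∑ ω ∈ S, bval Part μ v s i ω) - bval Part μ v s i u := by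
      rw [← Finset.sum_erase_add S _ hu]; ring
    rw [hsum] at h
    linarith

variable (μ c v) in
/-- certificate for a cell: local optimality with respect to a reference menu `a`
anchored at base occupancy `n`. -/
def Cert (n : Ω → ℕ) (q : N) (ρ : Finset Ω) (κq : ℕ) (S : Finset Ω) (a : Ω → ℝ) : Prop :=
  (∀ w ∈ ρ, w ∉ S → a w = μ w * v q (n w + 1) w) ∧
  (∀ u ∈ S, μ u * v q (n u + 1) u ≤ a u ∧ a u ≤ μ u * v q (n u) u) ∧
  (∀ u ∈ S, gc μ c q ρ S.card - gc μ c q ρ (S.card - 1) ≤ a u) ∧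
  (S.card < κq → ∀ w ∈ ρ, w ∉ S → a w ≤ gc μ c q ρ (S.card + 1) - gc μ c q ρ S.card) ∧
  (∀ u ∈ S, ∀ w ∈ ρ, w ∉ S → a w ≤ a u)

/-- abstract optimality from a certificate plus menu relations -/
lemma opt_of_cert_rel (hμ_pos : ∀ ω, 0 < μ ω) (hPart : ∀ i, IsPartition (Part i))
    (hc_convex : ∀ i k, c i (k + 1) - c i k ≤ c i (k + 2) - c i (k + 1))
    {n : Ω → ℕ} {q : N} {ρ : Finset Ω} {κq : ℕ} {s : N → Finset Ω → Finset Ω} {a : Ω → ℝ}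
    (hρ : ρ ∈ Part q) (hsub : s q ρ ⊆ ρ) (hcard : (s q ρ).card ≤ κq)
    (hcert : Cert μ c v n q ρ κq (s q ρ) a)
    (h1 : ∀ u ∈ s q ρ, a u ≤ bval Part μ v s q u)
    (h2 : ∀ w ∈ ρ, w ∉ s q ρ → bval Part μ v s q w ≤ a w) :
    ∀ T ⊆ ρ, T.card ≤ κq → cellF Part μ c v s q ρ T ≤ cellF Part μ c v s q ρ (s q ρ) := by
  intro T hT hTcard
  obtain ⟨_, _, hL1, hL2, hL3⟩ := hcert
  exact locg ρ (s q ρ) (bval Part μ v s q) (gc μ c q ρ) κq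
    (gc_convex hμ_pos hPart hc_convex hρ) hsub hcard
    (fun u hu => le_trans (hL1 u hu) (h1 u hu))
    (fun hlt w hw hwS => le_trans (h2 w hw hwS) (hL2 hlt w hw hwS))
    (fun u hu w hw hwS => le_trans (h2 w hw hwS) (le_trans (hL3 u hu w hw hwS) (h1 u hu)))
    T hT hTcard

end SG

namespace SG
open Finset SGaux SGaux2

variable {N Ω : Type} [Fintype N] [DecidableEq N] [Fintype Ω] [DecidableEq Ω]
variable {Part : N → Finset (Finset Ω)} {μ : Ω → ℝ} {c : N → ℕ → ℝ} {v : N → ℕ → Ω → ℝ}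
variable {K : N → ℕ}

variable (s : N → Finset Ω → Finset Ω) in
def upd (q : N) (ρ : Finset Ω) (T : Finset Ω) : N → Finset Ω → Finset Ω :=
  Function.update s q (Function.update (s q) ρ T)

lemma upd_self (s : N → Finset Ω → Finset Ω) (q : N) (ρ T : Finset Ω) :
    upd s q ρ T q ρ = T := by
  unfold upd; rw [Function.update_self, Function.update_self]

lemma upd_ne_player (s : N → Finset Ω → Finset Ω) {q j : N} (ρ T : Finset Ω) (hj : j ≠ q) :
    upd s q ρ T j = s j := by
  unfold upd; rw [Function.update_of_ne hj]

lemma upd_ne_cell (s : N → Finset Ω → Finset Ω) (q : N) {ρ π : Finset Ω} (T : Finset Ω)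
    (hπ : π ≠ ρ) : upd s q ρ T q π = s q π := by
  unfold upd; rw [Function.update_self, Function.update_of_ne hπ]

lemma searchesAt_upd_ne {s : N → Finset Ω → Finset Ω} {q j : N} {ρ T : Finset Ω} (hj : j ≠ q)
    (ω : Ω) : searchesAt Part (upd s q ρ T) j ω ↔ searchesAt Part s j ω := by
  unfold searchesAt
  rw [upd_ne_player s ρ T hj]

lemma othersAt_upd_q (s : N → Finset Ω → Finset Ω) (q : N) (ρ T : Finset Ω) (ω : Ω) :
    othersAt Part (upd s q ρ T) q ω = othersAt Part s q ω := by
  unfold othersAt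
  congr 1
  apply Finset.filter_congr
  intro j _
  constructor
  · rintro ⟨hj, hs⟩; exact ⟨hj, (searchesAt_upd_ne hj ω).mp hs⟩
  · rintro ⟨hj, hs⟩; exact ⟨hj, (searchesAt_upd_ne hj ω).mpr hs⟩

lemma searchesAt_upd_q (hPart : ∀ i, IsPartition (Part i)) {s : N → Finset Ω → Finset Ω}
    {q : N} {ρ : Finset Ω} {T : Finset Ω} (hρ : ρ ∈ Part q) {ω : Ω} (hω : ω ∈ ρ) :
    searchesAt Part (upd s q ρ T) q ω ↔ ω ∈ T := by
  rw [searchesAt_iff_mem hPart hρ hω, upd_self]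

lemma searchesAt_upd_q_off {s : N → Finset Ω → Finset Ω} {q : N} {ρ : Finset Ω} {T : Finset Ω}
    {ω : Ω} (hω : ω ∉ ρ) :
    searchesAt Part (upd s q ρ T) q ω ↔ searchesAt Part s q ω := by
  constructor
  · rintro ⟨π, hπ, hωπ, hm⟩
    have hπρ : π ≠ ρ := fun h => hω (h ▸ hωπ)
    rw [upd_ne_cell s q T hπρ] at hm
    exact ⟨π, hπ, hωπ, hm⟩
  · rintro ⟨π, hπ, hωπ, hm⟩
    have hπρ : π ≠ ρ := fun h => hω (h ▸ hωπ)
    exact ⟨π, hπ, hωπ, by rw [upd_ne_cell s q T hπρ]; exact hm⟩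

lemma mcount_mem (hPart : ∀ i, IsPartition (Part i)) {s : N → Finset Ω → Finset Ω}
    {q : N} {ρ : Finset Ω} (hρ : ρ ∈ Part q) {ω : Ω} (hω : ω ∈ ρ) :
    mcount Part s ω = othersAt Part s q ω + (if ω ∈ s q ρ then 1 else 0) := by
  rw [mcount_split s q ω, if_congr (searchesAt_iff_mem hPart hρ hω) rfl rfl]

lemma mcount_upd_mem (hPart : ∀ i, IsPartition (Part i)) {s : N → Finset Ω → Finset Ω}
    {q : N} {ρ : Finset Ω} {T : Finset Ω} (hρ : ρ ∈ Part q) {ω : Ω} (hω : ω ∈ ρ) :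
    mcount Part (upd s q ρ T) ω = othersAt Part s q ω + (if ω ∈ T then 1 else 0) := by
  rw [mcount_split (upd s q ρ T) q ω, othersAt_upd_q,
    if_congr (searchesAt_upd_q hPart hρ hω) rfl rfl]

lemma mcount_upd_off {s : N → Finset Ω → Finset Ω} {q : N} {ρ : Finset Ω} {T : Finset Ω}
    {ω : Ω} (hω : ω ∉ ρ) : mcount Part (upd s q ρ T) ω = mcount Part s ω := by
  rw [mcount_split (upd s q ρ T) q ω, othersAt_upd_q,
    if_congr (searchesAt_upd_q_off hω) rfl rfl, ← mcount_split]

lemma bval_not_search {s : N → Finset Ω → Finset Ω} {r : N} {ω : Ω}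
    (h : ¬ searchesAt Part s r ω) :
    bval Part μ v s r ω = μ ω * v r (mcount Part s ω + 1) ω := by
  unfold bval
  rw [mcount_split s r ω, if_neg h]

lemma bval_search {s : N → Finset Ω → Finset Ω} {r : N} {ω : Ω}
    (h : searchesAt Part s r ω) :
    bval Part μ v s r ω = μ ω * v r (mcount Part s ω) ω := by
  unfold bval
  rw [mcount_split s r ω, if_pos h]

/-- stability of a cell not holding the token -/
lemma stab_nonholder (hμ_pos : ∀ ω, 0 < μ ω) (hPart : ∀ i, IsPartition (Part i))
    (hc_convex : ∀ i k, c i (k + 1) - c i k ≤ c i (k + 2) - c i (k + 1))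
    (hv_dec : ∀ i m ω, v i (m + 1) ω ≤ v i m ω)
    {n : Ω → ℕ} {τ : Ω} {q : N} {ρ : Finset Ω} {κq : ℕ} {s : N → Finset Ω → Finset Ω} {a : Ω → ℝ}
    (hρ : ρ ∈ Part q) (hsub : s q ρ ⊆ ρ) (hcard : (s q ρ).card ≤ κq)
    (hcert : Cert μ c v n q ρ κq (s q ρ) a)
    (hn : ∀ ω ∈ ρ, mcount Part s ω = n ω + (if ω = τ then 1 else 0))
    (hτS : τ ∉ s q ρ) :
    ∀ T ⊆ ρ, T.card ≤ κq → cellF Part μ c v s q ρ T ≤ cellF Part μ c v s q ρ (s q ρ) := by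
  apply opt_of_cert_rel hμ_pos hPart hc_convex hρ hsub hcard hcert
  · intro u hu
    have huρ : u ∈ ρ := hsub hu
    have hse : searchesAt Part s q u := (searchesAt_iff_mem hPart hρ huρ).mpr hu
    rw [bval_search hse, hn u huρ]
    have huτ : u ≠ τ := fun h => hτS (h ▸ hu)
    rw [if_neg huτ]
    simpa using (hcert.2.1 u hu).2
  · intro w hw hwS
    have hse : ¬ searchesAt Part s q w := fun h => hwS ((searchesAt_iff_mem hPart hρ hw).mp h)
    rw [bval_not_search hse, hn w hw]
    by_cases hwτ : w = τ
    · rw [if_pos hwτ, hcert.1 w hw hwS]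
      exact mul_le_mul_of_nonneg_left (hv_dec q (n w + 1) w) (le_of_lt (hμ_pos w))
    · rw [if_neg hwτ, hcert.1 w hw hwS]

/-- stability of every cell when there is no token -/
lemma stab_quiet (hμ_pos : ∀ ω, 0 < μ ω) (hPart : ∀ i, IsPartition (Part i))
    (hc_convex : ∀ i k, c i (k + 1) - c i k ≤ c i (k + 2) - c i (k + 1))
    {n : Ω → ℕ} {q : N} {ρ : Finset Ω} {κq : ℕ} {s : N → Finset Ω → Finset Ω} {a : Ω → ℝ}
    (hρ : ρ ∈ Part q) (hsub : s q ρ ⊆ ρ) (hcard : (s q ρ).card ≤ κq)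
    (hcert : Cert μ c v n q ρ κq (s q ρ) a)
    (hn : ∀ ω ∈ ρ, mcount Part s ω = n ω) :
    ∀ T ⊆ ρ, T.card ≤ κq → cellF Part μ c v s q ρ T ≤ cellF Part μ c v s q ρ (s q ρ) := by
  apply opt_of_cert_rel hμ_pos hPart hc_convex hρ hsub hcard hcert
  · intro u hu
    have huρ : u ∈ ρ := hsub hu
    have hse : searchesAt Part s q u := (searchesAt_iff_mem hPart hρ huρ).mpr hu
    rw [bval_search hse, hn u huρ]
    exact (hcert.2.1 u hu).2
  · intro w hw hwS
    have hse : ¬ searchesAt Part s q w := fun h => hwS ((searchesAt_iff_mem hPart hρ hw).mp h)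
    rw [bval_not_search hse, hn w hw, hcert.1 w hw hwS]

end SG

set_option linter.unusedSectionVars false
set_option linter.unusedVariables false
set_option maxHeartbeats 1000000

namespace SG
open Finset SGaux SGaux2

variable {N Ω : Type} [Fintype N] [DecidableEq N] [Fintype Ω] [DecidableEq Ω]
variable {Part : N → Finset (Finset Ω)} {μ : Ω → ℝ} {c : N → ℕ → ℝ} {v : N → ℕ → Ω → ℝ}
variable {K : N → ℕ}

/-- The candidate best-response lemma: a token-holding cell has a best response
among `S`, `S.erase τ`, `insert w' (S.erase τ)`, with accompanying certificates. -/
lemma lemma1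
    (hμ_pos : ∀ ω, 0 < μ ω) (hv_dec : ∀ i m ω, v i (m + 1) ω ≤ v i m ω)
    {q : N} {ρ : Finset Ω} {κq : ℕ} {n : Ω → ℕ} {S : Finset Ω} {τ : Ω} {a b : Ω → ℝ}
    (hg : ∀ k, gc μ c q ρ (k+1) - gc μ c q ρ k ≤ gc μ c q ρ (k+2) - gc μ c q ρ (k+1))
    (hg1 : gc μ c q ρ 0 ≤ gc μ c q ρ 1)
    (hsub : S ⊆ ρ) (hScard : S.card ≤ κq) (hτ : τ ∈ S)
    (hcert : Cert μ c v n q ρ κq S a)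
    (hb1 : ∀ u ∈ S, u ≠ τ → a u ≤ b u)
    (hb2 : ∀ w ∈ ρ, w ∉ S → b w = a w)
    (hb3 : b τ ≤ a τ)
    (hbτval : b τ = μ τ * v q (n τ + 1) τ) :
    (∀ T ⊆ ρ, T.card ≤ κq →
        (∑ ω ∈ T, b ω) - gc μ c q ρ T.card ≤ (∑ ω ∈ S, b ω) - gc μ c q ρ S.card)
    ∨ ((∀ T ⊆ ρ, T.card ≤ κq →
        (∑ ω ∈ T, b ω) - gc μ c q ρ T.card ≤
          (∑ ω ∈ S.erase τ, b ω) - gc μ c q ρ (S.erase τ).card) ∧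
       Cert μ c v n q ρ κq (S.erase τ) (fun ω => if ω = τ then b ω else a ω) ∧
       b τ < gc μ c q ρ S.card - gc μ c q ρ (S.card - 1))
    ∨ (∃ w', w' ∈ ρ ∧ w' ∉ S ∧
       (∀ T ⊆ ρ, T.card ≤ κq →
        (∑ ω ∈ T, b ω) - gc μ c q ρ T.card ≤
          (∑ ω ∈ insert w' (S.erase τ), b ω) - gc μ c q ρ (insert w' (S.erase τ)).card) ∧
       Cert μ c v n q ρ κq (insert w' (S.erase τ))
         (fun ω => if ω = w' then b ω else if ω = τ then b ω else a ω) ∧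
       (insert w' (S.erase τ)).card = S.card) := by
  classical
  obtain ⟨hc1, hc2, hcL1, hcL2, hcL3⟩ := hcert
  set g := gc μ c q ρ with hgdef
  have hk1 : 1 ≤ S.card := Finset.card_pos.mpr ⟨τ, hτ⟩
  have hτρ : τ ∈ ρ := hsub hτ
  have hδmono : g S.card - g (S.card - 1) ≤ g (S.card + 1) - g S.card := by
    have h := delta_mono g hg (show S.card - 1 ≤ S.card by omega)
    rw [Nat.sub_add_cancel hk1] at h
    exact h
  have hδmono2 : g (S.card - 1) - g (S.card - 1 - 1) ≤ g S.card - g (S.card - 1) := by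
    rcases Nat.lt_or_ge S.card 2 with h2 | h2
    · have h1 : S.card = 1 := by omega
      rw [h1]
      simpa using hg1
    · have h3 := delta_mono g hg (show S.card - 1 - 1 ≤ S.card - 1 by omega)
      rw [Nat.sub_add_cancel (show 1 ≤ S.card - 1 by omega), Nat.sub_add_cancel hk1] at h3
      exact h3
  -- facts about erase
  have heraseS : (S.erase τ) ⊆ ρ := le_trans (Finset.erase_subset τ S) hsub
  have hecard : (S.erase τ).card = S.card - 1 := Finset.card_erase_of_mem hτ
  have he1 : S.card - 1 + 1 = S.card := by omega
  by_cases hne : ((ρ \ S).Nonempty)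
  · obtain ⟨w', hw'mem, hw'max⟩ := Finset.exists_max_image (ρ \ S) b hne
    have hw'ρ : w' ∈ ρ := (Finset.mem_sdiff.mp hw'mem).1
    have hw'S : w' ∉ S := (Finset.mem_sdiff.mp hw'mem).2
    have hβ : ∀ w ∈ ρ, w ∉ S → b w ≤ b w' := fun w hw hwS =>
      hw'max w (Finset.mem_sdiff.mpr ⟨hw, hwS⟩)
    have hβa : b w' = a w' := hb2 w' hw'ρ hw'S
    by_cases hA : g S.card - g (S.card - 1) ≤ b τ ∧ b w' ≤ b τ
    · -- case A : keep S
      left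
      intro T hT hTc
      apply locg ρ S b g κq hg hsub hScard _ _ _ T hT hTc
      · intro u hu
        by_cases huτ : u = τ
        · rw [huτ]; exact hA.1
        · exact le_trans (hcL1 u hu) (hb1 u hu huτ)
      · intro hlt w hw hwS
        rw [hb2 w hw hwS]
        exact hcL2 hlt w hw hwS
      · intro u hu w hw hwS
        by_cases huτ : u = τ
        · rw [huτ]; exact le_trans (hβ w hw hwS) hA.2
        · rw [hb2 w hw hwS]
          exact le_trans (hcL3 u hu w hw hwS) (hb1 u hu huτ)
    · push_neg at hA
      by_cases hB : g S.card - g (S.card - 1) ≤ b w'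
      · -- swap case
        right; right
        have hw'e : w' ∉ S.erase τ := fun h => hw'S (Finset.mem_of_mem_erase h)
        have hS'card : (insert w' (S.erase τ)).card = S.card := by
          rw [Finset.card_insert_of_notMem hw'e, hecard]; omega
        have hτ' : b τ < g S.card - g (S.card - 1) ∨ b τ < b w' := by
          rcases lt_or_ge (b τ) (g S.card - g (S.card - 1)) with h | h
          · exact Or.inl h
          · exact Or.inr (hA h)
        have hτδ1 : S.card < κq → b τ ≤ g (S.card + 1) - g S.card := by
          intro hlt
          rcases hτ' with h | h
          · linarith
          · have := hcL2 hlt w' hw'ρ hw'S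
            rw [hβa] at h
            linarith
        have hτle : ∀ u ∈ S, u ≠ τ → b τ ≤ a u := by
          intro u hu huτ
          rcases hτ' with h | h
          · linarith [hcL1 u hu]
          · rw [hβa] at h
            linarith [hcL3 u hu w' hw'ρ hw'S]
        have hτlew : b τ ≤ b w' := by
          rcases hτ' with h | h
          · linarith
          · linarith
        have hS'sub : insert w' (S.erase τ) ⊆ ρ := Finset.insert_subset hw'ρ heraseS
        have hS'c : (insert w' (S.erase τ)).card ≤ κq := by rw [hS'card]; exact hScard
        have hmemS' : ∀ x, x ∈ insert w' (S.erase τ) ↔ (x = w' ∨ (x ∈ S ∧ x ≠ τ)) := by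
          intro x
          simp [Finset.mem_insert, Finset.mem_erase, and_comm]
        have hnotmemS' : ∀ x, x ∉ insert w' (S.erase τ) → x ≠ w' ∧ (x = τ ∨ x ∉ S) := by
          intro x hx
          constructor
          · intro h; exact hx ((hmemS' x).mpr (Or.inl h))
          · by_cases hxτ : x = τ
            · exact Or.inl hxτ
            · refine Or.inr (fun hxS => hx ((hmemS' x).mpr (Or.inr ⟨hxS, hxτ⟩)))
        refine ⟨w', hw'ρ, hw'S, ?_, ?_, hS'card⟩
        · -- optimality via locg
          intro T hT hTc
          apply locg ρ (insert w' (S.erase τ)) b g κq hg hS'sub hS'c _ _ _ T hT hTc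
          · intro u hu
            rw [hS'card]
            rcases (hmemS' u).mp hu with huw' | ⟨huS, huτ⟩
            · rw [huw']; exact hB
            · exact le_trans (hcL1 u huS) (hb1 u huS huτ)
          · intro hlt w hw hwS'
            rw [hS'card] at hlt ⊢
            obtain ⟨hww', hwor⟩ := hnotmemS' w hwS'
            rcases hwor with hwτ | hwS
            · rw [hwτ]; exact hτδ1 hlt
            · rw [hb2 w hw hwS]
              exact hcL2 hlt w hw hwS
          · intro u hu w hw hwS'
            obtain ⟨hww', hwor⟩ := hnotmemS' w hwS'
            rcases (hmemS' u).mp hu with huw' | ⟨huS, huτ⟩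
            · rw [huw']
              rcases hwor with hwτ | hwS
              · rw [hwτ]; exact hτlew
              · exact hβ w hw hwS
            · rcases hwor with hwτ | hwS
              · rw [hwτ]; exact le_trans (hτle u huS huτ) (hb1 u huS huτ)
              · rw [hb2 w hw hwS]
                exact le_trans (hcL3 u huS w hw hwS) (hb1 u huS huτ)
        · -- certificate for the new set
          refine ⟨?_, ?_, ?_, ?_, ?_⟩
          · -- (i)
            intro w hw hwS'
            obtain ⟨hww', hwor⟩ := hnotmemS' w hwS'
            rcases hwor with hwτ | hwS
            · simp only [if_neg hww', if_pos hwτ]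
              rw [hwτ]; exact hbτval
            · simp only [if_neg hww',
                if_neg (show w ≠ τ from fun h => hwS (h ▸ hτ) )]
              exact hc1 w hw hwS
          · -- (ii)
            intro u hu
            rcases (hmemS' u).mp hu with huw' | ⟨huS, huτ⟩
            · simp only [if_pos huw']
              rw [huw', hβa, hc1 w' hw'ρ hw'S]
              constructor
              · exact le_refl _
              · exact mul_le_mul_of_nonneg_left (hv_dec q (n w') w') (le_of_lt (hμ_pos w'))
            · have huw' : u ≠ w' := fun h => hw'S (h ▸ huS)
              simp only [if_neg huw', if_neg huτ]
              exact hc2 u huS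
          · -- L1
            intro u hu
            rw [hS'card]
            rcases (hmemS' u).mp hu with huw' | ⟨huS, huτ⟩
            · simp only [if_pos huw']
              rw [huw']; exact hB
            · have huw' : u ≠ w' := fun h => hw'S (h ▸ huS)
              simp only [if_neg huw', if_neg huτ]
              exact hcL1 u huS
          · -- L2
            intro hlt w hw hwS'
            rw [hS'card] at hlt
            rw [hS'card]
            obtain ⟨hww', hwor⟩ := hnotmemS' w hwS'
            rcases hwor with hwτ | hwS
            · simp only [if_neg hww', if_pos hwτ]
              rw [hwτ]; exact hτδ1 hlt
            · have hwτ : w ≠ τ := fun h => hwS (h ▸ hτ)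
              simp only [if_neg hww', if_neg hwτ]
              exact hcL2 hlt w hw hwS
          · -- L3
            intro u hu w hw hwS'
            obtain ⟨hww', hwor⟩ := hnotmemS' w hwS'
            rcases (hmemS' u).mp hu with huw' | ⟨huS, huτ⟩
            · simp only [if_pos huw']
              rcases hwor with hwτ | hwS
              · simp only [if_neg hww', if_pos hwτ]
                rw [hwτ, huw']; exact hτlew
              · have hwτ : w ≠ τ := fun h => hwS (h ▸ hτ)
                simp only [if_neg hww', if_neg hwτ]
                rw [huw', ← hb2 w hw hwS]
                exact hβ w hw hwS
            · have huw' : u ≠ w' := fun h => hw'S (h ▸ huS)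
              simp only [if_neg huw', if_neg huτ]
              rcases hwor with hwτ | hwS
              · simp only [if_neg hww', if_pos hwτ]
                rw [hwτ]; exact hτle u huS huτ
              · have hwτ : w ≠ τ := fun h => hwS (h ▸ hτ)
                simp only [if_neg hww', if_neg hwτ]
                exact hcL3 u huS w hw hwS
      · -- drop case (β < δ and bτ < δ)
        right; left
        push_neg at hB
        have hbτδ : b τ < g S.card - g (S.card - 1) := by
          rcases lt_or_ge (b τ) (g S.card - g (S.card - 1)) with h | h
          · exact h
          · have := hA h
            linarith
        refine ⟨?_, ⟨?_, ?_, ?_, ?_, ?_⟩, hbτδ⟩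
        · -- optimality of S.erase τ
          intro T hT hTc
          apply locg ρ (S.erase τ) b g κq hg heraseS
            (le_trans (Finset.card_le_card (Finset.erase_subset τ S)) hScard) _ _ _ T hT hTc
          · intro u hu
            rw [hecard]
            have huS := Finset.mem_of_mem_erase hu
            have huτ := Finset.ne_of_mem_erase hu
            calc g (S.card - 1) - g (S.card - 1 - 1) ≤ g S.card - g (S.card - 1) := hδmono2
              _ ≤ a u := hcL1 u huS
              _ ≤ b u := hb1 u huS huτ
          · intro hlt w hw hwe
            rw [hecard, he1]
            by_cases hwτ : w = τ
            · rw [hwτ]; linarith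
            · have hwS : w ∉ S := fun h => hwe (Finset.mem_erase.mpr ⟨hwτ, h⟩)
              have := hβ w hw hwS
              linarith
          · intro u hu w hw hwe
            have huS := Finset.mem_of_mem_erase hu
            have huτ := Finset.ne_of_mem_erase hu
            by_cases hwτ : w = τ
            · rw [hwτ]
              calc b τ ≤ g S.card - g (S.card - 1) := le_of_lt hbτδ
                _ ≤ a u := hcL1 u huS
                _ ≤ b u := hb1 u huS huτ
            · have hwS : w ∉ S := fun h => hwe (Finset.mem_erase.mpr ⟨hwτ, h⟩)
              calc b w ≤ b w' := hβ w hw hwS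
                _ ≤ g S.card - g (S.card - 1) := le_of_lt hB
                _ ≤ a u := hcL1 u huS
                _ ≤ b u := hb1 u huS huτ
        · intro w hw hwe
          by_cases hwτ : w = τ
          · simp only [if_pos hwτ]
            rw [hwτ]; exact hbτval
          · have hwS : w ∉ S := fun h => hwe (Finset.mem_erase.mpr ⟨hwτ, h⟩)
            simp only [if_neg hwτ]
            exact hc1 w hw hwS
        · intro u hu
          have huτ := Finset.ne_of_mem_erase hu
          simp only [if_neg huτ]
          exact hc2 u (Finset.mem_of_mem_erase hu)
        · intro u hu
          have huτ := Finset.ne_of_mem_erase hu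
          simp only [if_neg huτ]
          rw [hecard]
          exact le_trans hδmono2 (hcL1 u (Finset.mem_of_mem_erase hu))
        · intro hlt w hw hwe
          rw [hecard, he1]
          by_cases hwτ : w = τ
          · simp only [if_pos hwτ]
            rw [hwτ]; linarith
          · have hwS : w ∉ S := fun h => hwe (Finset.mem_erase.mpr ⟨hwτ, h⟩)
            simp only [if_neg hwτ]
            rw [← hb2 w hw hwS]
            have := hβ w hw hwS
            linarith
        · intro u hu w hw hwe
          have huτ := Finset.ne_of_mem_erase hu
          have huS := Finset.mem_of_mem_erase hu
          simp only [if_neg huτ]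
          by_cases hwτ : w = τ
          · simp only [if_pos hwτ]
            rw [hwτ]
            linarith [hcL1 u huS]
          · have hwS : w ∉ S := fun h => hwe (Finset.mem_erase.mpr ⟨hwτ, h⟩)
            simp only [if_neg hwτ]
            exact hcL3 u huS w hw hwS
  · -- ρ \ S empty : no alternatives
    have hno : ∀ w ∈ ρ, w ∉ S → False := by
      intro w hw hwS
      exact hne ⟨w, Finset.mem_sdiff.mpr ⟨hw, hwS⟩⟩
    by_cases hbτ : g S.card - g (S.card - 1) ≤ b τ
    · left
      intro T hT hTc
      apply locg ρ S b g κq hg hsub hScard _ _ _ T hT hTc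
      · intro u hu
        by_cases huτ : u = τ
        · rw [huτ]; exact hbτ
        · exact le_trans (hcL1 u hu) (hb1 u hu huτ)
      · intro hlt w hw hwS
        exact absurd (hno w hw hwS) (by simp)
      · intro u hu w hw hwS
        exact absurd (hno w hw hwS) (by simp)
    · right; left
      push_neg at hbτ
      refine ⟨?_, ⟨?_, ?_, ?_, ?_, ?_⟩, hbτ⟩
      · intro T hT hTc
        apply locg ρ (S.erase τ) b g κq hg heraseS
          (le_trans (Finset.card_le_card (Finset.erase_subset τ S)) hScard) _ _ _ T hT hTc
        · intro u hu
          rw [hecard]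
          have huS := Finset.mem_of_mem_erase hu
          have huτ := Finset.ne_of_mem_erase hu
          calc g (S.card - 1) - g (S.card - 1 - 1) ≤ g S.card - g (S.card - 1) := hδmono2
            _ ≤ a u := hcL1 u huS
            _ ≤ b u := hb1 u huS huτ
        · intro hlt w hw hwe
          rw [hecard, he1]
          by_cases hwτ : w = τ
          · rw [hwτ]; linarith
          · exact absurd (hno w hw (fun h => hwe (Finset.mem_erase.mpr ⟨hwτ, h⟩))) (by simp)
        · intro u hu w hw hwe
          have huS := Finset.mem_of_mem_erase hu
          have huτ := Finset.ne_of_mem_erase hu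
          by_cases hwτ : w = τ
          · rw [hwτ]
            calc b τ ≤ g S.card - g (S.card - 1) := le_of_lt hbτ
              _ ≤ a u := hcL1 u huS
              _ ≤ b u := hb1 u huS huτ
          · exact absurd (hno w hw (fun h => hwe (Finset.mem_erase.mpr ⟨hwτ, h⟩))) (by simp)
      · intro w hw hwe
        by_cases hwτ : w = τ
        · simp only [if_pos hwτ]
          rw [hwτ]; exact hbτval
        · exact absurd (hno w hw (fun h => hwe (Finset.mem_erase.mpr ⟨hwτ, h⟩))) (by simp)
      · intro u hu
        have huτ := Finset.ne_of_mem_erase hu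
        simp only [if_neg huτ]
        exact hc2 u (Finset.mem_of_mem_erase hu)
      · intro u hu
        have huτ := Finset.ne_of_mem_erase hu
        simp only [if_neg huτ]
        rw [hecard]
        exact le_trans hδmono2 (hcL1 u (Finset.mem_of_mem_erase hu))
      · intro hlt w hw hwe
        rw [hecard, he1]
        by_cases hwτ : w = τ
        · simp only [if_pos hwτ]
          rw [hwτ]; linarith
        · exact absurd (hno w hw (fun h => hwe (Finset.mem_erase.mpr ⟨hwτ, h⟩))) (by simp)
      · intro u hu w hw hwe
        have huτ := Finset.ne_of_mem_erase hu
        have huS := Finset.mem_of_mem_erase hu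
        simp only [if_neg huτ]
        by_cases hwτ : w = τ
        · simp only [if_pos hwτ]
          rw [hwτ]
          linarith [hcL1 u huS]
        · exact absurd (hno w hw (fun h => hwe (Finset.mem_erase.mpr ⟨hwτ, h⟩))) (by simp)

end SG

namespace SG
open Finset SGaux SGaux2

variable {N Ω : Type} [Fintype N] [DecidableEq N] [Fintype Ω] [DecidableEq Ω]
variable {Part : N → Finset (Finset Ω)} {μ : Ω → ℝ} {c : N → ℕ → ℝ} {v : N → ℕ → Ω → ℝ}
variable {K : N → ℕ}

lemma cellF_def (s : N → Finset Ω → Finset Ω) (i : N) (π T : Finset Ω) :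
    cellF Part μ c v s i π T = (∑ ω ∈ T, bval Part μ v s i ω) - gc μ c i π T.card := rfl

variable (Part μ v) in
noncomputable def PhiN (n : Ω → ℕ) (s : N → Finset Ω → Finset Ω) : ℝ :=
  ∑ q : N, ∑ ρ ∈ Part q, ∑ u ∈ s q ρ, μ u * v q (n u + 1) u

variable (Part μ v) in
noncomputable def Phi (st : (N → Finset Ω → Finset Ω) × Ω) : ℝ :=
  PhiN Part μ v (fun ω => mcount Part st.1 ω - (if ω = st.2 then 1 else 0)) st.1

variable (Part μ v) in
noncomputable def chainMeasure (st : (N → Finset Ω → Finset Ω) × Ω) : ℕ :=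
  ((Finset.univ : Finset ((N → Finset Ω → Finset Ω) × Ω)).filter
    fun st' => Phi Part μ v st < Phi Part μ v st').card

lemma chainMeasure_lt {st st' : (N → Finset Ω → Finset Ω) × Ω}
    (h : Phi Part μ v st < Phi Part μ v st') :
    chainMeasure Part μ v st' < chainMeasure Part μ v st := by
  apply Finset.card_lt_card
  rw [Finset.ssubset_iff_of_subset]
  · exact ⟨st', by simp [h], by simp⟩
  · intro x hx
    simp only [Finset.mem_filter, Finset.mem_univ, true_and] at hx ⊢
    exact lt_trans h hx

lemma mcount_pos_of_mem (hPart : ∀ i, IsPartition (Part i)) {s : N → Finset Ω → Finset Ω}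
    {q : N} {ρ : Finset Ω} (hρ : ρ ∈ Part q) {τ : Ω} (hτρ : τ ∈ ρ) (hτ : τ ∈ s q ρ) :
    1 ≤ mcount Part s τ := by
  unfold mcount
  have : (Finset.univ.filter fun i => searchesAt Part s i τ).Nonempty :=
    ⟨q, Finset.mem_filter.mpr ⟨Finset.mem_univ q, ⟨ρ, hρ, hτρ, hτ⟩⟩⟩
  exact Nat.one_le_iff_ne_zero.mpr (fun h => (Finset.card_eq_zero.mp h ▸ this).ne_empty rfl)

lemma Vald_upd {κ : N → Finset Ω → ℕ} {s : N → Finset Ω → Finset Ω}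
    (hval : Vald Part κ s) {q : N} {ρ : Finset Ω} {T : Finset Ω}
    (hT : T ⊆ ρ) (hTc : T.card ≤ κ q ρ) : Vald Part κ (upd s q ρ T) := by
  intro i π hπ
  by_cases hiq : i = q
  · subst hiq
    by_cases hπρ : π = ρ
    · subst hπρ
      rw [upd_self]
      exact ⟨hT, hTc⟩
    · rw [upd_ne_cell s i T hπρ]
      exact hval i π hπ
  · rw [upd_ne_player s _ _ hiq]
    exact hval i π hπ

lemma PhiN_diff (n : Ω → ℕ) (s : N → Finset Ω → Finset Ω) {q : N} {ρ : Finset Ω}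
    (hρ : ρ ∈ Part q) (T : Finset Ω) :
    PhiN Part μ v n (upd s q ρ T) - PhiN Part μ v n s =
      (∑ u ∈ T, μ u * v q (n u + 1) u) - ∑ u ∈ s q ρ, μ u * v q (n u + 1) u := by
  unfold PhiN
  rw [← Finset.sum_sub_distrib]
  rw [Finset.sum_eq_single_of_mem q (Finset.mem_univ q)]
  · rw [← Finset.sum_sub_distrib]
    rw [Finset.sum_eq_single_of_mem ρ hρ]
    · rw [upd_self]
    · intro σ hσ hσρ
      rw [upd_ne_cell s q T hσρ]
      ring
  · intro r _ hrq
    rw [upd_ne_player s _ _ hrq]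
    have : ∀ σ ∈ Part r, (∑ u ∈ s r σ, μ u * v r (n u + 1) u)
        - (∑ u ∈ s r σ, μ u * v r (n u + 1) u) = 0 := by intro σ _; ring
    rw [← Finset.sum_sub_distrib]
    exact Finset.sum_eq_zero this

end SG

namespace SG
open Finset SGaux SGaux2

variable {N Ω : Type} [Fintype N] [DecidableEq N] [Fintype Ω] [DecidableEq Ω]
variable {Part : N → Finset (Finset Ω)} {μ : Ω → ℝ} {c : N → ℕ → ℝ} {v : N → ℕ → Ω → ℝ}
variable {K : N → ℕ}

theorem chain
    (hPart : ∀ i, IsPartition (Part i)) (hμ_pos : ∀ ω, 0 < μ ω)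
    (hc_mono : ∀ i k, c i k ≤ c i (k + 1))
    (hc_convex : ∀ i k, c i (k + 1) - c i k ≤ c i (k + 2) - c i (k + 1))
    (hv_dec : ∀ i m ω, v i (m + 1) ω ≤ v i m ω)
    (hSSD1 : ∀ i, ∀ π ∈ Part i, ∀ ω ∈ π, ∀ ω' ∈ π,
      (μ ω' / ∑ x ∈ π, μ x) * v i 2 ω' ≤ (μ ω / ∑ x ∈ π, μ x) * v i 1 ω)
    (hSSD2 : ∀ i, ∀ π ∈ Part i, ∀ ω ∈ π,
      c i (K i) - c i (K i - 1) ≤ (μ ω / ∑ x ∈ π, μ x) * v i 1 ω)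
    (κ : N → Finset Ω → ℕ) (hκK : ∀ i, ∀ π ∈ Part i, κ i π ≤ K i) :
    ∀ (meas : ℕ) (s : N → Finset Ω → Finset Ω) (τ : Ω),
      chainMeasure Part μ v (s, τ) ≤ meas →
      Vald Part κ s →
      1 ≤ mcount Part s τ →
      (∀ q, ∀ ρ ∈ Part q, ∃ a,
        Cert μ c v (fun ω => mcount Part s ω - (if ω = τ then 1 else 0)) q ρ (κ q ρ) (s q ρ) a) →
      ∃ s', NEk Part μ c v κ s' ∧ countP Part s ≤ countP Part s' := by
  intro meas
  induction meas using Nat.strong_induction_on with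
  | _ meas ih =>
  intro s τ hmeas hval hτpos hINV
  set n : Ω → ℕ := fun ω => mcount Part s ω - (if ω = τ then 1 else 0) with hndef
  have hnrel : ∀ ω, mcount Part s ω = n ω + (if ω = τ then 1 else 0) := by
    intro ω
    by_cases h : ω = τ
    · subst h; simp only [hndef, if_pos]; omega
    · rw [hndef]; simp only [if_neg h]; omega
  have hmc_ne : ∀ ω, ω ≠ τ → mcount Part s ω = n ω := by
    intro ω h
    rw [hnrel ω, if_neg h]; omega
  have hmcτ : mcount Part s τ = n τ + 1 := by
    rw [hnrel τ, if_pos rfl]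
  by_cases hstrict : ∃ q, ∃ ρ ∈ Part q, ∃ T, T ⊆ ρ ∧ T.card ≤ κ q ρ ∧
      cellF Part μ c v s q ρ (s q ρ) < cellF Part μ c v s q ρ T
  · obtain ⟨q, ρ, hρ, T0, hT0, hT0c, hT0s⟩ := hstrict
    obtain ⟨hsub, hcard⟩ := hval q ρ hρ
    obtain ⟨a, hcert⟩ := hINV q ρ hρ
    have hτin : τ ∈ s q ρ := by
      by_contra hτS
      have hopt := stab_nonholder hμ_pos hPart hc_convex hv_dec hρ hsub hcard hcert
        (fun ω _ => hnrel ω) hτS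
      exact absurd (hopt T0 hT0 hT0c) (not_le.mpr hT0s)
    have hτρ : τ ∈ ρ := hsub hτin
    have hkS : 1 ≤ (s q ρ).card := Finset.card_pos.mpr ⟨τ, hτin⟩
    have hbval_mem : ∀ u ∈ s q ρ, bval Part μ v s q u = μ u * v q (mcount Part s u) u :=
      fun u hu => bval_search ((searchesAt_iff_mem hPart hρ (hsub hu)).mpr hu)
    have hbval_not : ∀ w ∈ ρ, w ∉ s q ρ →
        bval Part μ v s q w = μ w * v q (mcount Part s w + 1) w :=
      fun w hw hwS => bval_not_search (fun h => hwS ((searchesAt_iff_mem hPart hρ hw).mp h))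
    have hb1 : ∀ u ∈ s q ρ, u ≠ τ → a u ≤ bval Part μ v s q u := by
      intro u hu huτ
      rw [hbval_mem u hu, hmc_ne u huτ]
      exact (hcert.2.1 u hu).2
    have hb2 : ∀ w ∈ ρ, w ∉ s q ρ → bval Part μ v s q w = a w := by
      intro w hw hwS
      have hwτ : w ≠ τ := fun h => hwS (h ▸ hτin)
      rw [hbval_not w hw hwS, hmc_ne w hwτ, hcert.1 w hw hwS]
    have hbτval : bval Part μ v s q τ = μ τ * v q (n τ + 1) τ := by
      rw [hbval_mem τ hτin, hmcτ]
    have hb3 : bval Part μ v s q τ ≤ a τ := by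
      rw [hbτval]; exact (hcert.2.1 τ hτin).1
    have hg1 : gc μ c q ρ 0 ≤ gc μ c q ρ 1 :=
      mul_le_mul_of_nonneg_left (hc_mono q 0) (le_of_lt (musum_pos hμ_pos hPart hρ))
    rcases lemma1 hμ_pos hv_dec (gc_convex hμ_pos hPart hc_convex hρ) hg1 hsub hcard hτin
        hcert hb1 hb2 hb3 hbτval with
      hA | ⟨hBRdrop, hcert2, hbτδ⟩ | ⟨w', hw'ρ, hw'S, hBRswap, hcert3, hS'card⟩
    · -- case A impossible
      exact absurd (hA T0 hT0 hT0c) (not_le.mpr hT0s)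
    · -- DROP case
      set s₂ := upd s q ρ ((s q ρ).erase τ) with hs₂def
      have hset2 : s₂ q ρ = (s q ρ).erase τ := upd_self s q ρ _
      have hnτpos : 1 ≤ n τ := by
        by_contra h0
        have hnτ : n τ = 0 := by omega
        have hbig := step_le hμ_pos hPart hc_convex hSSD2 hρ hτρ hkS
          (le_trans hcard (hκK q ρ hρ))
        rw [hbτval, hnτ] at hbτδ
        norm_num at hbτδ
        linarith
      have hmc2 : ∀ ω, mcount Part s₂ ω = n ω := by
        intro ω
        by_cases hωρ : ω ∈ ρ
        · rw [hs₂def, mcount_upd_mem hPart hρ hωρ]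
          by_cases hωτ : ω = τ
          · subst hωτ
            rw [if_neg (Finset.notMem_erase ω _)]
            have h1 := mcount_mem hPart hρ hωρ (s := s)
            rw [if_pos hτin] at h1
            omega
          · have hiff : ω ∈ (s q ρ).erase τ ↔ ω ∈ s q ρ := by
              rw [Finset.mem_erase]
              exact ⟨fun h => h.2, fun h => ⟨hωτ, h⟩⟩
            rw [if_congr hiff rfl rfl, ← mcount_mem hPart hρ hωρ, hmc_ne ω hωτ]
        · rw [hs₂def, mcount_upd_off hωρ]
          exact hmc_ne ω (fun h => hωρ (h ▸ hτρ))
      have hval₂ : Vald Part κ s₂ :=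
        Vald_upd hval (le_trans (Finset.erase_subset τ (s q ρ)) hsub)
          (le_trans (Finset.card_le_card (Finset.erase_subset τ (s q ρ))) hcard)
      have hNE₂ : NEk Part μ c v κ s₂ := by
        refine ⟨hval₂, ?_⟩
        intro r σ hσ T hT hTc
        by_cases hrq : r = q
        · subst hrq
          by_cases hσρ : σ = ρ
          · subst hσρ
            exact stab_quiet hμ_pos hPart hc_convex hσ (hval₂ r σ hσ).1 (hval₂ r σ hσ).2
              (by rw [hset2]; exact hcert2) (fun ω _ => hmc2 ω) T hT hTc
          · have hsetr : s₂ r σ = s r σ := upd_ne_cell s r _ hσρ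
            obtain ⟨a', hcert'⟩ := hINV r σ hσ
            exact stab_quiet hμ_pos hPart hc_convex hσ (hval₂ r σ hσ).1 (hval₂ r σ hσ).2
              (by rw [hsetr]; exact hcert') (fun ω _ => hmc2 ω) T hT hTc
        · have hsetr : s₂ r σ = s r σ := congrFun (upd_ne_player s _ _ hrq) σ
          obtain ⟨a', hcert'⟩ := hINV r σ hσ
          exact stab_quiet hμ_pos hPart hc_convex hσ (hval₂ r σ hσ).1 (hval₂ r σ hσ).2
            (by rw [hsetr]; exact hcert') (fun ω _ => hmc2 ω) T hT hTc
      refine ⟨s₂, hNE₂, le_of_eq ?_⟩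
      unfold countP
      congr 1
      apply Finset.filter_congr
      intro ω _
      rw [hmc2 ω]
      by_cases hωτ : ω = τ
      · subst hωτ
        exact ⟨fun _ => hnτpos, fun _ => hτpos⟩
      · rw [hmc_ne ω hωτ]
    · -- SWAP case
      set S' := insert w' ((s q ρ).erase τ) with hS'def
      set s₃ := upd s q ρ S' with hs₃def
      have hset3 : s₃ q ρ = S' := upd_self s q ρ _
      have hτw' : τ ≠ w' := fun h => hw'S (h ▸ hτin)
      have hw'e : w' ∉ (s q ρ).erase τ := fun h => hw'S (Finset.mem_of_mem_erase h)
      have hS'sub : S' ⊆ ρ :=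
        Finset.insert_subset hw'ρ (le_trans (Finset.erase_subset τ (s q ρ)) hsub)
      have hS'c : S'.card ≤ κ q ρ := by rw [hS'card]; exact hcard
      have hval₃ : Vald Part κ s₃ := Vald_upd hval hS'sub hS'c
      have hw'in3 : w' ∈ s₃ q ρ := by rw [hset3]; exact Finset.mem_insert_self w' _
      have hmc3w' : 1 ≤ mcount Part s₃ w' := mcount_pos_of_mem hPart hρ hw'ρ hw'in3
      have hn₃ : ∀ ω, mcount Part s₃ ω - (if ω = w' then 1 else 0) = n ω := by
        intro ω
        by_cases hωρ : ω ∈ ρ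
        · rw [hs₃def, mcount_upd_mem hPart hρ hωρ]
          by_cases hωw' : ω = w'
          · subst hωw'
            rw [if_pos (by rw [hS'def]; exact Finset.mem_insert_self ω _), if_pos rfl]
            have h1 := mcount_mem hPart hρ hωρ (s := s)
            rw [if_neg hw'S] at h1
            rw [← hmc_ne ω (fun h => hτw' h.symm)]
            omega
          · by_cases hωτ : ω = τ
            · subst hωτ
              have hτS' : ω ∉ S' := by
                rw [hS'def]
                intro h
                rcases Finset.mem_insert.mp h with h1 | h1
                · exact hωw' h1
                · exact (Finset.notMem_erase ω _) h1
              rw [if_neg hτS', if_neg hωw']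
              have h1 := mcount_mem hPart hρ hωρ (s := s)
              rw [if_pos hτin] at h1
              omega
            · have hiff : ω ∈ S' ↔ ω ∈ s q ρ := by
                rw [hS'def, Finset.mem_insert, Finset.mem_erase]
                constructor
                · rintro (h | h)
                  · exact absurd h hωw'
                  · exact h.2
                · intro h; exact Or.inr ⟨hωτ, h⟩
              rw [if_congr hiff rfl rfl, ← mcount_mem hPart hρ hωρ, if_neg hωw',
                hmc_ne ω hωτ]
              omega
        · rw [hs₃def, mcount_upd_off hωρ, if_neg (show ¬ ω = w' from fun h => hωρ (by rw [h]; exact hw'ρ))]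
          have := hmc_ne ω (fun h => hωρ (h ▸ hτρ))
          omega
      have hnfun : (fun ω => mcount Part s₃ ω - (if ω = w' then 1 else 0)) = n := funext hn₃
      have hINV₃ : ∀ r, ∀ σ ∈ Part r, ∃ a',
          Cert μ c v (fun ω => mcount Part s₃ ω - (if ω = w' then 1 else 0)) r σ (κ r σ)
            (s₃ r σ) a' := by
        intro r σ hσ
        rw [hnfun]
        by_cases hrq : r = q
        · subst hrq
          by_cases hσρ : σ = ρ
          · subst hσρ
            exact ⟨_, by rw [hset3]; exact hcert3⟩
          · have hsetr : s₃ r σ = s r σ := upd_ne_cell s r _ hσρ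
            obtain ⟨a', hcert'⟩ := hINV r σ hσ
            exact ⟨a', by rw [hsetr]; exact hcert'⟩
        · have hsetr : s₃ r σ = s r σ := congrFun (upd_ne_player s _ _ hrq) σ
          obtain ⟨a', hcert'⟩ := hINV r σ hσ
          exact ⟨a', by rw [hsetr]; exact hcert'⟩
      -- strictness and potential increase
      have hstrictS' : cellF Part μ c v s q ρ (s q ρ) < cellF Part μ c v s q ρ S' :=
        lt_of_lt_of_le hT0s (hBRswap T0 hT0 hT0c)
      have hsumS' : ∑ ω ∈ S', bval Part μ v s q ω =
          bval Part μ v s q w' + ((∑ ω ∈ s q ρ, bval Part μ v s q ω) - bval Part μ v s q τ) := by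
        rw [hS'def, Finset.sum_insert hw'e]
        congr 1
        rw [← Finset.sum_erase_add (s q ρ) _ hτin]
        ring
      have hdiff : cellF Part μ c v s q ρ S' - cellF Part μ c v s q ρ (s q ρ) =
          bval Part μ v s q w' - bval Part μ v s q τ := by
        rw [cellF_def, cellF_def, hS'card, hsumS']
        ring
      have hbw'val : bval Part μ v s q w' = μ w' * v q (n w' + 1) w' := by
        rw [hbval_not w' hw'ρ hw'S, hmc_ne w' (fun h => hτw' h.symm)]
      have hPhi3 : Phi Part μ v (s₃, w') = PhiN Part μ v n s₃ := by
        show PhiN Part μ v (fun ω => mcount Part s₃ ω - (if ω = w' then 1 else 0)) s₃ =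
          PhiN Part μ v n s₃
        rw [hnfun]
      have hPhiS : Phi Part μ v (s, τ) = PhiN Part μ v n s := rfl
      have hPhiDiff : Phi Part μ v (s₃, w') - Phi Part μ v (s, τ) =
          bval Part μ v s q w' - bval Part μ v s q τ := by
        rw [hPhi3, hPhiS, hs₃def, PhiN_diff n s hρ S']
        have h1 : ∑ u ∈ S', μ u * v q (n u + 1) u =
            μ w' * v q (n w' + 1) w' +
              ((∑ u ∈ s q ρ, μ u * v q (n u + 1) u) - μ τ * v q (n τ + 1) τ) := by
          rw [hS'def, Finset.sum_insert hw'e]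
          congr 1
          rw [← Finset.sum_erase_add (s q ρ) _ hτin]
          ring
        rw [h1, hbw'val, hbτval]
        ring
      have hPhiLt : Phi Part μ v (s, τ) < Phi Part μ v (s₃, w') := by
        have h2 : (0:ℝ) < bval Part μ v s q w' - bval Part μ v s q τ := by
          rw [← hdiff]; linarith
        linarith [hPhiDiff]
      -- count does not decrease
      have hmc3 : ∀ ω, ω ≠ w' → mcount Part s₃ ω = n ω := by
        intro ω h
        have := hn₃ ω
        rw [if_neg h] at this
        omega
      have hmc3w'' : mcount Part s₃ w' = n w' + 1 := by
        have := hn₃ w'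
        rw [if_pos rfl] at this
        omega
      have hcnt : countP Part s ≤ countP Part s₃ := by
        by_cases h1 : 1 ≤ n τ
        · apply Finset.card_le_card
          intro ω hω
          simp only [Finset.mem_filter, Finset.mem_univ, true_and] at hω ⊢
          by_cases hωw' : ω = w'
          · subst hωw'; omega
          · rw [hmc3 ω hωw']
            by_cases hωτ : ω = τ
            · subst hωτ; omega
            · rw [← hmc_ne ω hωτ]; exact hω
        · have hnτ0 : n τ = 0 := by omega
          have hw'0 : mcount Part s w' = 0 := by
            by_contra hcon
            have h2 : 2 ≤ mcount Part s w' + 1 := by omega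
            have h3 : μ w' * v q (mcount Part s w' + 1) w' ≤ μ τ * v q 1 τ :=
              ssd1' hμ_pos hPart hv_dec hSSD1 hρ hτρ hw'ρ h2
            have h4 : bval Part μ v s q w' ≤ bval Part μ v s q τ := by
              rw [hbval_not w' hw'ρ hw'S, hbτval, hnτ0]
              simpa using h3
            linarith [hdiff, hstrictS']
          have hw'n0 : n w' = 0 := by
            rw [← hmc_ne w' (fun h => hτw' h.symm)]; exact hw'0
          have hsets : ((Finset.univ : Finset Ω).filter fun ω => 1 ≤ mcount Part s₃ ω) =
              insert w' (((Finset.univ : Finset Ω).filter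
                fun ω => 1 ≤ mcount Part s ω).erase τ) := by
            ext ω
            simp only [Finset.mem_filter, Finset.mem_univ, true_and, Finset.mem_insert,
              Finset.mem_erase]
            by_cases hωw' : ω = w'
            · subst hωw'
              simp only [true_or, iff_true]
              omega
            · rw [hmc3 ω hωw']
              by_cases hωτ : ω = τ
              · subst hωτ
                constructor
                · intro h; omega
                · rintro (h | ⟨h, _⟩)
                  · exact absurd h hωw'
                  · exact absurd rfl h
              · rw [← hmc_ne ω hωτ]
                constructor
                · intro h; exact Or.inr ⟨hωτ, h⟩
                · rintro (h | ⟨_, h⟩)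
                  · exact absurd h hωw'
                  · exact h
          unfold countP
          rw [hsets]
          have hw'nf : w' ∉ ((Finset.univ : Finset Ω).filter
              fun ω => 1 ≤ mcount Part s ω).erase τ := by
            intro h
            have := (Finset.mem_filter.mp (Finset.mem_of_mem_erase h)).2
            omega
          rw [Finset.card_insert_of_notMem hw'nf, Finset.card_erase_of_mem]
          · have hτf : τ ∈ (Finset.univ : Finset Ω).filter
                (fun ω => 1 ≤ mcount Part s ω) := Finset.mem_filter.mpr ⟨Finset.mem_univ τ, hτpos⟩
            have : 1 ≤ ((Finset.univ : Finset Ω).filter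
                fun ω => 1 ≤ mcount Part s ω).card := Finset.card_pos.mpr ⟨τ, hτf⟩
            omega
          · exact Finset.mem_filter.mpr ⟨Finset.mem_univ τ, hτpos⟩
      -- recurse
      have hmeas₃ : chainMeasure Part μ v (s₃, w') < meas :=
        lt_of_lt_of_le (chainMeasure_lt hPhiLt) hmeas
      obtain ⟨s', hNE', hcnt'⟩ := ih (chainMeasure Part μ v (s₃, w')) hmeas₃ s₃ w'
        (le_refl _) hval₃ hmc3w' hINV₃
      exact ⟨s', hNE', le_trans hcnt hcnt'⟩
  · -- no strict improvement anywhere : s is an equilibrium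
    push_neg at hstrict
    refine ⟨s, ⟨hval, ?_⟩, le_refl _⟩
    intro i π hπ T hT hTc
    exact hstrict i π hπ T hT hTc

end SG

namespace SG
open Finset SGaux SGaux2

variable {N Ω : Type} [Fintype N] [DecidableEq N] [Fintype Ω] [DecidableEq Ω]
variable {Part : N → Finset (Finset Ω)} {μ : Ω → ℝ} {c : N → ℕ → ℝ} {v : N → ℕ → Ω → ℝ}
variable {K : N → ℕ}

/-- base (tokenless) certificate from equilibrium play -/
lemma cert_of_NE (hPart : ∀ i, IsPartition (Part i)) (hμ_pos : ∀ ω, 0 < μ ω)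
    (hv_dec : ∀ i m ω, v i (m + 1) ω ≤ v i m ω)
    {κq : ℕ} {s : N → Finset Ω → Finset Ω} {q : N} {ρ : Finset Ω} (hρ : ρ ∈ Part q)
    (hsub : s q ρ ⊆ ρ) (hcard : (s q ρ).card ≤ κq)
    (hopt : ∀ T ⊆ ρ, T.card ≤ κq → cellF Part μ c v s q ρ T ≤ cellF Part μ c v s q ρ (s q ρ)) :
    Cert μ c v (fun ω => mcount Part s ω) q ρ κq (s q ρ) (bval Part μ v s q) := by
  obtain ⟨hL1, hL2, hL3⟩ := locOfOpt hsub hcard hopt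
  refine ⟨?_, ?_, hL1, hL2, hL3⟩
  · intro w hw hwS
    exact bval_not_search (fun h => hwS ((searchesAt_iff_mem hPart hρ hw).mp h))
  · intro u hu
    have hse : searchesAt Part s q u := (searchesAt_iff_mem hPart hρ (hsub hu)).mpr hu
    rw [bval_search hse]
    constructor
    · exact mul_le_mul_of_nonneg_left (hv_dec q (mcount Part s u) u) (le_of_lt (hμ_pos u))
    · exact le_refl _

lemma addslot
    (hPart : ∀ i, IsPartition (Part i)) (hμ_pos : ∀ ω, 0 < μ ω)
    (hc_mono : ∀ i k, c i k ≤ c i (k + 1))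
    (hc_convex : ∀ i k, c i (k + 1) - c i k ≤ c i (k + 2) - c i (k + 1))
    (hv_dec : ∀ i m ω, v i (m + 1) ω ≤ v i m ω)
    (hSSD1 : ∀ i, ∀ π ∈ Part i, ∀ ω ∈ π, ∀ ω' ∈ π,
      (μ ω' / ∑ x ∈ π, μ x) * v i 2 ω' ≤ (μ ω / ∑ x ∈ π, μ x) * v i 1 ω)
    (hSSD2 : ∀ i, ∀ π ∈ Part i, ∀ ω ∈ π,
      c i (K i) - c i (K i - 1) ≤ (μ ω / ∑ x ∈ π, μ x) * v i 1 ω)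
    (κ : N → Finset Ω → ℕ) (hκK : ∀ i, ∀ π ∈ Part i, κ i π ≤ K i)
    {p : N} {π0 : Finset Ω} (hπ0 : π0 ∈ Part p) (hlt : κ p π0 < K p)
    {s : N → Finset Ω → Finset Ω} (hNE : NEk Part μ c v κ s) :
    ∃ s', NEk Part μ c v
        (fun i π => if i = p ∧ π = π0 then κ p π0 + 1 else κ i π) s' ∧
      countP Part s ≤ countP Part s' := by
  classical
  set κ' : N → Finset Ω → ℕ := fun i π => if i = p ∧ π = π0 then κ p π0 + 1 else κ i π
    with hκ'def
  have hκ'pp : κ' p π0 = κ p π0 + 1 := by rw [hκ'def]; simp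
  have hκ'ne : ∀ i π, (i ≠ p ∨ π ≠ π0) → κ' i π = κ i π := by
    intro i π h
    rw [hκ'def]
    simp only
    rw [if_neg (by tauto)]
  have hκ'K : ∀ i, ∀ π ∈ Part i, κ' i π ≤ K i := by
    intro i π hπ
    by_cases h : i = p ∧ π = π0
    · obtain ⟨rfl, rfl⟩ := h
      rw [hκ'pp]; omega
    · rw [hκ'ne i π (by tauto)]
      exact hκK i π hπ
  obtain ⟨hval, hopt⟩ := hNE
  obtain ⟨hsub, hcard⟩ := hval p π0 hπ0
  -- the other cells remain optimal for κ' since their capacity is unchanged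
  have hothers : ∀ r, ∀ σ ∈ Part r, (r ≠ p ∨ σ ≠ π0) →
      ∀ T ⊆ σ, T.card ≤ κ' r σ → cellF Part μ c v s r σ T ≤ cellF Part μ c v s r σ (s r σ) := by
    intro r σ hσ h T hT hTc
    rw [hκ'ne r σ h] at hTc
    exact hopt r σ hσ T hT hTc
  have hval' : Vald Part κ' s := by
    intro i π hπ
    by_cases h : i = p ∧ π = π0
    · obtain ⟨rfl, rfl⟩ := h
      exact ⟨hsub, by rw [hκ'pp]; omega⟩
    · rw [hκ'ne i π (by tauto)]
      exact hval i π hπ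
  obtain ⟨hL1, hL2, hL3⟩ := locOfOpt hsub hcard (hopt p π0 hπ0)
  by_cases hfull : (s p π0).card = κ p π0
  · by_cases hne : ((π0 \ s p π0).Nonempty)
    · obtain ⟨w', hw'mem, hw'max⟩ := Finset.exists_max_image (π0 \ s p π0)
        (bval Part μ v s p) hne
      have hw'π : w' ∈ π0 := (Finset.mem_sdiff.mp hw'mem).1
      have hw'S : w' ∉ s p π0 := (Finset.mem_sdiff.mp hw'mem).2
      have hβ : ∀ w ∈ π0, w ∉ s p π0 → bval Part μ v s p w ≤ bval Part μ v s p w' :=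
        fun w hw hwS => hw'max w (Finset.mem_sdiff.mpr ⟨hw, hwS⟩)
      by_cases hworth : gc μ c p π0 ((s p π0).card + 1) - gc μ c p π0 (s p π0).card ≤
          bval Part μ v s p w'
      · -- add the slot : s₃ = s with w' inserted, then run the chain from (s₃, w')
        set S' := insert w' (s p π0) with hS'def
        set s₃ := upd s p π0 S' with hs₃def
        have hset3 : s₃ p π0 = S' := upd_self s p π0 _
        have hS'sub : S' ⊆ π0 := Finset.insert_subset hw'π hsub
        have hS'card : S'.card = (s p π0).card + 1 := Finset.card_insert_of_notMem hw'S
        have hS'c : S'.card ≤ κ' p π0 := by rw [hS'card, hκ'pp]; omega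
        have hval₃ : Vald Part κ' s₃ := Vald_upd hval' hS'sub hS'c
        have hw'in3 : w' ∈ s₃ p π0 := by rw [hset3]; exact Finset.mem_insert_self w' _
        have hmc3w' : 1 ≤ mcount Part s₃ w' := mcount_pos_of_mem hPart hπ0 hw'π hw'in3
        have hw'nos : ¬ searchesAt Part s p w' :=
          fun h => hw'S ((searchesAt_iff_mem hPart hπ0 hw'π).mp h)
        have hn₃ : ∀ ω, mcount Part s₃ ω - (if ω = w' then 1 else 0) = mcount Part s ω := by
          intro ω
          by_cases hωπ : ω ∈ π0
          · rw [hs₃def, mcount_upd_mem hPart hπ0 hωπ]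
            by_cases hωw' : ω = w'
            · subst hωw'
              rw [if_pos (by rw [hS'def]; exact Finset.mem_insert_self ω _), if_pos rfl]
              have h1 := mcount_mem hPart hπ0 hωπ (s := s)
              rw [if_neg hw'S] at h1
              omega
            · have hiff : ω ∈ S' ↔ ω ∈ s p π0 := by
                rw [hS'def, Finset.mem_insert]
                constructor
                · rintro (h | h)
                  · exact absurd h hωw'
                  · exact h
                · intro h; exact Or.inr h
              rw [if_congr hiff rfl rfl, ← mcount_mem hPart hπ0 hωπ, if_neg hωw']
              omega
          · rw [hs₃def, mcount_upd_off hωπ,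
              if_neg (show ¬ ω = w' from fun h => hωπ (by rw [h]; exact hw'π))]
            omega
        have hnfun : (fun ω => mcount Part s₃ ω - (if ω = w' then 1 else 0)) =
            (fun ω => mcount Part s ω) := funext hn₃
        -- certificates
        have hcertp : Cert μ c v (fun ω => mcount Part s ω) p π0 (κ' p π0) S'
            (bval Part μ v s p) := by
          refine ⟨?_, ?_, ?_, ?_, ?_⟩
          · intro w hw hwS'
            have hwS : w ∉ s p π0 := fun h => hwS' (by rw [hS'def]; exact Finset.mem_insert_of_mem h)
            exact bval_not_search (fun h => hwS ((searchesAt_iff_mem hPart hπ0 hw).mp h))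
          · intro u hu
            rcases Finset.mem_insert.mp (hS'def ▸ hu) with rfl | huS
            · rw [bval_not_search hw'nos]
              constructor
              · exact le_refl _
              · exact mul_le_mul_of_nonneg_left (hv_dec p (mcount Part s u) u)
                  (le_of_lt (hμ_pos u))
            · have hse : searchesAt Part s p u := (searchesAt_iff_mem hPart hπ0 (hsub huS)).mpr huS
              rw [bval_search hse]
              exact ⟨mul_le_mul_of_nonneg_left (hv_dec p (mcount Part s u) u)
                  (le_of_lt (hμ_pos u)), le_refl _⟩
          · intro u hu
            rw [hS'card, hfull]
            have hstep : gc μ c p π0 (κ p π0 + 1) - gc μ c p π0 (κ p π0 + 1 - 1) =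
                gc μ c p π0 ((s p π0).card + 1) - gc μ c p π0 (s p π0).card := by
              rw [hfull]
              norm_num
            rw [hstep]
            rcases Finset.mem_insert.mp (hS'def ▸ hu) with rfl | huS
            · exact hworth
            · exact le_trans (le_trans hworth (hβ w' hw'π hw'S)) (hL3 u huS w' hw'π hw'S)
          · intro hltc
            rw [hS'card, hfull, hκ'pp] at hltc
            omega
          · intro u hu w hw hwS'
            have hwS : w ∉ s p π0 := fun h => hwS' (by rw [hS'def]; exact Finset.mem_insert_of_mem h)
            rcases Finset.mem_insert.mp (hS'def ▸ hu) with rfl | huS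
            · exact hβ w hw hwS
            · exact hL3 u huS w hw hwS
        have hINV₃ : ∀ r, ∀ σ ∈ Part r, ∃ a',
            Cert μ c v (fun ω => mcount Part s₃ ω - (if ω = w' then 1 else 0)) r σ (κ' r σ)
              (s₃ r σ) a' := by
          intro r σ hσ
          rw [hnfun]
          by_cases hrp : r = p
          · subst hrp
            by_cases hσπ : σ = π0
            · subst hσπ
              exact ⟨_, by rw [hset3]; exact hcertp⟩
            · have hsetr : s₃ r σ = s r σ := upd_ne_cell s r _ hσπ
              refine ⟨bval Part μ v s r, ?_⟩
              rw [hsetr, hκ'ne r σ (Or.inr hσπ)]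
              exact cert_of_NE hPart hμ_pos hv_dec hσ (hval r σ hσ).1 (hval r σ hσ).2
                (hopt r σ hσ)
          · have hsetr : s₃ r σ = s r σ := congrFun (upd_ne_player s _ _ hrp) σ
            refine ⟨bval Part μ v s r, ?_⟩
            rw [hsetr, hκ'ne r σ (Or.inl hrp)]
            exact cert_of_NE hPart hμ_pos hv_dec hσ (hval r σ hσ).1 (hval r σ hσ).2
              (hopt r σ hσ)
        have hcnt3 : countP Part s ≤ countP Part s₃ := by
          apply Finset.card_le_card
          intro ω hω
          simp only [Finset.mem_filter, Finset.mem_univ, true_and] at hω ⊢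
          have := hn₃ ω
          by_cases h : ω = w' <;> [rw [if_pos h] at this; rw [if_neg h] at this] <;> omega
        obtain ⟨s', hNE', hcnt'⟩ := chain hPart hμ_pos hc_mono hc_convex hv_dec hSSD1 hSSD2
          κ' hκ'K (chainMeasure Part μ v (s₃, w')) s₃ w' (le_refl _) hval₃ hmc3w' hINV₃
        exact ⟨s', hNE', le_trans hcnt3 hcnt'⟩
      · -- not worth adding : s stays an equilibrium
        push_neg at hworth
        refine ⟨s, ⟨hval', ?_⟩, le_refl _⟩
        intro r σ hσ T hT hTc
        by_cases h : r = p ∧ σ = π0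
        · obtain ⟨rfl, rfl⟩ := h
          rw [hκ'pp] at hTc
          apply locg σ (s r σ) (bval Part μ v s r) (gc μ c r σ) (κ r σ + 1)
            (gc_convex hμ_pos hPart hc_convex hσ) hsub (by omega) hL1
            ?_ hL3 T hT hTc
          intro _ w hw hwS
          exact le_trans (le_of_lt (lt_of_le_of_lt (hβ w hw hwS) hworth)) (le_refl _)
        · exact hothers r σ hσ (by tauto) T hT hTc
    · -- cell exhausted : no alternative locations at all
      refine ⟨s, ⟨hval', ?_⟩, le_refl _⟩
      intro r σ hσ T hT hTc
      by_cases h : r = p ∧ σ = π0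
      · obtain ⟨rfl, rfl⟩ := h
        rw [hκ'pp] at hTc
        apply locg σ (s r σ) (bval Part μ v s r) (gc μ c r σ) (κ r σ + 1)
          (gc_convex hμ_pos hPart hc_convex hσ) hsub (by omega) hL1
          ?_ hL3 T hT hTc
        intro _ w hw hwS
        exact absurd ⟨w, Finset.mem_sdiff.mpr ⟨hw, hwS⟩⟩ hne
      · exact hothers r σ hσ (by tauto) T hT hTc
  · -- slack already : s remains an equilibrium at the bigger capacity
    have hslack : (s p π0).card < κ p π0 := lt_of_le_of_ne hcard hfull
    refine ⟨s, ⟨hval', ?_⟩, le_refl _⟩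
    intro r σ hσ T hT hTc
    by_cases h : r = p ∧ σ = π0
    · obtain ⟨rfl, rfl⟩ := h
      rw [hκ'pp] at hTc
      apply locg σ (s r σ) (bval Part μ v s r) (gc μ c r σ) (κ r σ + 1)
        (gc_convex hμ_pos hPart hc_convex hσ) hsub (by omega) hL1
        (fun _ => hL2 hslack) hL3 T hT hTc
    · exact hothers r σ hσ (by tauto) T hT hTc

end SG

namespace SG
open Finset SGaux SGaux2

variable {N Ω : Type} [Fintype N] [DecidableEq N] [Fintype Ω] [DecidableEq Ω]
variable {Part : N → Finset (Finset Ω)} {μ : Ω → ℝ} {c : N → ℕ → ℝ} {v : N → ℕ → Ω → ℝ}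
variable {K : N → ℕ}

lemma base_exists
    (hPart : ∀ i, IsPartition (Part i)) (hμ_pos : ∀ ω, 0 < μ ω)
    (hc_mono : ∀ i k, c i k ≤ c i (k + 1))
    (hc_convex : ∀ i k, c i (k + 1) - c i k ≤ c i (k + 2) - c i (k + 1))
    (hv_dec : ∀ i m ω, v i (m + 1) ω ≤ v i m ω)
    (hSSD1 : ∀ i, ∀ π ∈ Part i, ∀ ω ∈ π, ∀ ω' ∈ π,
      (μ ω' / ∑ x ∈ π, μ x) * v i 2 ω' ≤ (μ ω / ∑ x ∈ π, μ x) * v i 1 ω)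
    (hSSD2 : ∀ i, ∀ π ∈ Part i, ∀ ω ∈ π,
      c i (K i) - c i (K i - 1) ≤ (μ ω / ∑ x ∈ π, μ x) * v i 1 ω) :
    ∃ (κ₀ : N → Finset Ω → ℕ) (d : N → Finset Ω → Finset Ω),
      (∀ i, ∀ π ∈ Part i, κ₀ i π ≤ K i) ∧
      Vald Part κ₀ d ∧
      (∀ i, ∀ π ∈ Part i, ∀ T ⊆ π, T.card ≤ κ₀ i π →
        cellF Part μ c v d i π T ≤ cellF Part μ c v d i π (d i π)) ∧
      ∀ s', ValidStrat Part K s' → countP Part s' ≤ countP Part d := by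
  classical
  -- a profile maximizing coverage
  have hvalEmpty : ValidStrat Part K (fun _ _ => (∅ : Finset Ω)) := by
    intro i π hπ
    exact ⟨Finset.empty_subset π, by simp⟩
  have hVne : ((Finset.univ : Finset (N → Finset Ω → Finset Ω)).filter
      fun t => ValidStrat Part K t).Nonempty :=
    ⟨fun _ _ => ∅, Finset.mem_filter.mpr ⟨Finset.mem_univ _, hvalEmpty⟩⟩
  obtain ⟨smax, hsmaxmem, hsmax⟩ := Finset.exists_max_image _ (countP Part) hVne
  have hsmaxval : ValidStrat Part K smax := (Finset.mem_filter.mp hsmaxmem).2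
  have hsmaxbest : ∀ s', ValidStrat Part K s' → countP Part s' ≤ countP Part smax := by
    intro s' h
    exact hsmax s' (Finset.mem_filter.mpr ⟨Finset.mem_univ _, h⟩)
  -- disjointification
  have hcov : ∀ ω, 1 ≤ mcount Part smax ω →
      ∃ ip : N × Finset Ω, ip.2 ∈ Part ip.1 ∧ ω ∈ ip.2 ∧ ω ∈ smax ip.1 ip.2 := by
    intro ω h
    have hpos : 0 < (Finset.univ.filter fun i => searchesAt Part smax i ω).card := h
    obtain ⟨i, hi⟩ := Finset.card_pos.mp hpos
    obtain ⟨π, hπ, hωπ, hmem⟩ := (Finset.mem_filter.mp hi).2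
    exact ⟨(i, π), hπ, hωπ, hmem⟩
  set pick : Ω → Option (N × Finset Ω) := fun ω =>
    if h : 1 ≤ mcount Part smax ω then some (Classical.choose (hcov ω h)) else none
    with hpickdef
  have hpick : ∀ ω i π, pick ω = some (i, π) →
      1 ≤ mcount Part smax ω ∧ π ∈ Part i ∧ ω ∈ π ∧ ω ∈ smax i π := by
    intro ω i π h
    rw [hpickdef] at h
    simp only at h
    by_cases hc : 1 ≤ mcount Part smax ω
    · rw [dif_pos hc] at h
      obtain ⟨h1, h2, h3⟩ := Classical.choose_spec (hcov ω hc)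
      have he : Classical.choose (hcov ω hc) = (i, π) := by injection h
      rw [he] at h1 h2 h3
      exact ⟨hc, h1, h2, h3⟩
    · rw [dif_neg hc] at h
      exact absurd h (by simp)
  have hpick_some : ∀ ω (h : 1 ≤ mcount Part smax ω),
      pick ω = some (Classical.choose (hcov ω h)) := by
    intro ω h
    rw [hpickdef]
    simp only
    rw [dif_pos h]
  set d₁ : N → Finset Ω → Finset Ω := fun i π => π.filter (fun ω => pick ω = some (i, π))
    with hd₁def
  have hd₁mem : ∀ i π ω, ω ∈ d₁ i π ↔ (ω ∈ π ∧ pick ω = some (i, π)) := by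
    intro i π ω
    rw [hd₁def]
    exact Finset.mem_filter
  have hd₁search : ∀ j ω, searchesAt Part d₁ j ω ↔ ∃ π, π ∈ Part j ∧ pick ω = some (j, π) := by
    intro j ω
    constructor
    · rintro ⟨π, hπ, hωπ, hm⟩
      exact ⟨π, hπ, ((hd₁mem j π ω).mp hm).2⟩
    · rintro ⟨π, hπ, h⟩
      obtain ⟨_, _, hωπ, _⟩ := hpick ω j π h
      exact ⟨π, hπ, hωπ, (hd₁mem j π ω).mpr ⟨hωπ, h⟩⟩
  have hd₁val : ValidStrat Part K d₁ := by
    intro i π hπ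
    constructor
    · rw [hd₁def]; exact Finset.filter_subset _ _
    · have hsub : d₁ i π ⊆ smax i π := by
        intro ω hω
        obtain ⟨hωπ, hp⟩ := (hd₁mem i π ω).mp hω
        exact (hpick ω i π hp).2.2.2
      exact le_trans (Finset.card_le_card hsub) (hsmaxval i π hπ).2
  have hd₁dis : ∀ ω, mcount Part d₁ ω ≤ 1 := by
    intro ω
    apply Finset.card_le_one.mpr
    intro a ha b hb
    obtain ⟨πa, _, hpa⟩ := (hd₁search a ω).mp (Finset.mem_filter.mp ha).2
    obtain ⟨πb, _, hpb⟩ := (hd₁search b ω).mp (Finset.mem_filter.mp hb).2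
    have := hpa.symm.trans hpb
    injection this with h
    exact (Prod.mk.injEq _ _ _ _ ▸ h : a = b ∧ πa = πb).1
  have hd₁cov : ∀ ω, 1 ≤ mcount Part d₁ ω ↔ 1 ≤ mcount Part smax ω := by
    intro ω
    constructor
    · intro h
      obtain ⟨j, hj⟩ := Finset.card_pos.mp h
      obtain ⟨π, _, hp⟩ := (hd₁search j ω).mp (Finset.mem_filter.mp hj).2
      exact (hpick ω j π hp).1
    · intro h
      obtain ⟨hπ, hωπ, hmem⟩ := Classical.choose_spec (hcov ω h)
      apply mcount_pos_of_mem hPart hπ hωπ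
      rw [hd₁mem]
      exact ⟨hωπ, by
        rw [hpick_some ω h]⟩
  have hd₁cnt : countP Part d₁ = countP Part smax := by
    unfold countP
    congr 1
    apply Finset.filter_congr
    intro ω _
    exact hd₁cov ω
  -- Λ-maximal disjoint coverage-maximal profile
  set Lam : (N → Finset Ω → Finset Ω) → ℝ := PhiN Part μ v (fun _ => 0) with hLamdef
  have hDne : ((Finset.univ : Finset (N → Finset Ω → Finset Ω)).filter
      fun t => ValidStrat Part K t ∧ (∀ ω, mcount Part t ω ≤ 1) ∧
        countP Part t = countP Part smax).Nonempty :=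
    ⟨d₁, Finset.mem_filter.mpr ⟨Finset.mem_univ _, hd₁val, hd₁dis, hd₁cnt⟩⟩
  obtain ⟨d, hdmem, hdmax⟩ := Finset.exists_max_image _ Lam hDne
  obtain ⟨hdval, hddis, hdcnt⟩ := (Finset.mem_filter.mp hdmem).2
  refine ⟨fun i π => (d i π).card, d, ?_, ?_, ?_, ?_⟩
  · intro i π hπ
    exact (hdval i π hπ).2
  · intro i π hπ
    exact ⟨(hdval i π hπ).1, le_refl _⟩
  · -- per-cell optimality
    intro i π hπ T hT hTc
    have hsub : d i π ⊆ π := (hdval i π hπ).1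
    have hmc1 : ∀ u ∈ d i π, mcount Part d u = 1 := by
      intro u hu
      have h1 := mcount_pos_of_mem hPart hπ (hsub hu) hu
      have h2 := hddis u
      omega
    have hoth0 : ∀ u ∈ d i π, othersAt Part d i u = 0 := by
      intro u hu
      have := mcount_mem hPart hπ (hsub hu) (s := d)
      rw [if_pos hu, hmc1 u hu] at this
      omega
    have hbvalS : ∀ u ∈ d i π, bval Part μ v d i u = μ u * v i 1 u := by
      intro u hu
      unfold bval
      rw [hoth0 u hu]
    apply locg π (d i π) (bval Part μ v d i) (gc μ c i π) (d i π).card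
      (gc_convex hμ_pos hPart hc_convex hπ) hsub (le_refl _) ?_ ?_ ?_ T hT hTc
    · -- L1
      intro u hu
      rw [hbvalS u hu]
      exact step_le hμ_pos hPart hc_convex hSSD2 hπ (hsub hu)
        (Finset.card_pos.mpr ⟨u, hu⟩) (hdval i π hπ).2
    · -- L2 vacuous
      intro hlt
      omega
    · -- L3
      intro u hu w hw hwS
      have hnse : ¬ searchesAt Part d i w := fun h => hwS ((searchesAt_iff_mem hPart hπ hw).mp h)
      rw [bval_not_search hnse, hbvalS u hu]
      rcases Nat.eq_zero_or_pos (mcount Part d w) with hw0 | hwpos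
      · -- exchange argument via Λ-maximality
        rw [hw0]
        set d' := upd d i π (insert w ((d i π).erase u)) with hd'def
        have hwu : w ≠ u := fun h => hwS (h ▸ hu)
        have hwer : w ∉ (d i π).erase u := fun h => hwS (Finset.mem_of_mem_erase h)
        have hercard : ((d i π).erase u).card = (d i π).card - 1 :=
          Finset.card_erase_of_mem hu
        have hupos : 1 ≤ (d i π).card := Finset.card_pos.mpr ⟨u, hu⟩
        have hinscard : (insert w ((d i π).erase u)).card = (d i π).card := by
          rw [Finset.card_insert_of_notMem hwer, hercard]; omega
        have hinssub : insert w ((d i π).erase u) ⊆ π :=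
          Finset.insert_subset hw (le_trans (Finset.erase_subset u (d i π)) hsub)
        have hd'val : ValidStrat Part K d' := by
          intro r σ hσ
          by_cases hr : r = i
          · subst hr
            by_cases hσπ : σ = π
            · subst hσπ
              rw [hd'def, upd_self]
              exact ⟨hinssub, by rw [hinscard]; exact (hdval r σ hσ).2⟩
            · rw [hd'def, upd_ne_cell d r _ hσπ]
              exact hdval r σ hσ
          · rw [hd'def, upd_ne_player d _ _ hr]
            exact hdval r σ hσ
        have hmcd' : ∀ ω, mcount Part d' ω =
            if ω = w then 1 else (if ω = u then 0 else mcount Part d ω) := by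
          intro ω
          by_cases hωπ : ω ∈ π
          · rw [hd'def, mcount_upd_mem hPart hπ hωπ]
            by_cases hωw : ω = w
            · subst hωw
              rw [if_pos (Finset.mem_insert_self ω _), if_pos rfl]
              have h1 := mcount_mem hPart hπ hωπ (s := d)
              rw [if_neg hwS] at h1
              omega
            · rw [if_neg hωw]
              by_cases hωu : ω = u
              · rw [if_pos hωu]
                have hnot : ω ∉ insert w ((d i π).erase u) := by
                  intro hmem
                  rcases Finset.mem_insert.mp hmem with h | h
                  · exact hωw h
                  · exact Finset.notMem_erase u (d i π) (hωu ▸ h)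
                rw [if_neg hnot, hωu, hoth0 u hu]
              · rw [if_neg hωu]
                have hiff : ω ∈ insert w ((d i π).erase u) ↔ ω ∈ d i π := by
                  rw [Finset.mem_insert, Finset.mem_erase]
                  constructor
                  · rintro (h | h)
                    · exact absurd h hωw
                    · exact h.2
                  · intro h; exact Or.inr ⟨hωu, h⟩
                rw [if_congr hiff rfl rfl, ← mcount_mem hPart hπ hωπ]
          · have hωw : ω ≠ w := fun h => hωπ (h ▸ hw)
            have hωu : ω ≠ u := fun h => hωπ (h ▸ hsub hu)
            rw [hd'def, mcount_upd_off hωπ, if_neg hωw, if_neg hωu]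
        have hd'dis : ∀ ω, mcount Part d' ω ≤ 1 := by
          intro ω
          rw [hmcd' ω]
          split_ifs
          · omega
          · omega
          · exact hddis ω
        have hd'cnt : countP Part d' = countP Part smax := by
          rw [← hdcnt]
          unfold countP
          have hsets : ((Finset.univ : Finset Ω).filter fun ω => 1 ≤ mcount Part d' ω) =
              insert w (((Finset.univ : Finset Ω).filter
                fun ω => 1 ≤ mcount Part d ω).erase u) := by
            ext ω
            simp only [Finset.mem_filter, Finset.mem_univ, true_and, Finset.mem_insert,
              Finset.mem_erase]
            rw [hmcd' ω]
            by_cases hωw : ω = w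
            · simp [hωw]
            · rw [if_neg hωw]
              by_cases hωu : ω = u
              · subst hωu
                rw [if_pos rfl]
                simp only [hωw, false_or]
                constructor
                · intro h; omega
                · rintro ⟨h, _⟩; exact absurd rfl h
              · rw [if_neg hωu]
                constructor
                · intro h; exact Or.inr ⟨hωu, h⟩
                · rintro (h | ⟨_, h⟩)
                  · exact absurd h hωw
                  · exact h
          rw [hsets]
          have hwnf : w ∉ ((Finset.univ : Finset Ω).filter
              fun ω => 1 ≤ mcount Part d ω).erase u := by
            intro h
            have := (Finset.mem_filter.mp (Finset.mem_of_mem_erase h)).2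
            omega
          have hunf : u ∈ (Finset.univ : Finset Ω).filter
              fun ω => 1 ≤ mcount Part d ω :=
            Finset.mem_filter.mpr ⟨Finset.mem_univ u, by rw [hmc1 u hu]⟩
          rw [Finset.card_insert_of_notMem hwnf, Finset.card_erase_of_mem hunf]
          have : 1 ≤ ((Finset.univ : Finset Ω).filter
              fun ω => 1 ≤ mcount Part d ω).card := Finset.card_pos.mpr ⟨u, hunf⟩
          omega
        have hd'mem : d' ∈ (Finset.univ : Finset (N → Finset Ω → Finset Ω)).filter
            (fun t => ValidStrat Part K t ∧ (∀ ω, mcount Part t ω ≤ 1) ∧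
              countP Part t = countP Part smax) :=
          Finset.mem_filter.mpr ⟨Finset.mem_univ _, hd'val, hd'dis, hd'cnt⟩
        have hLle := hdmax d' hd'mem
        rw [hLamdef] at hLle
        have hdiff := PhiN_diff (μ := μ) (v := v) (fun _ => 0) d hπ
          (insert w ((d i π).erase u))
        rw [← hd'def] at hdiff
        have hsum : ∑ x ∈ insert w ((d i π).erase u), μ x * v i (0 + 1) x =
            μ w * v i (0 + 1) w +
              ((∑ x ∈ d i π, μ x * v i (0 + 1) x) - μ u * v i (0 + 1) u) := by
          rw [Finset.sum_insert hwer]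
          congr 1
          rw [← Finset.sum_erase_add (d i π) _ hu]
          ring
        rw [hsum] at hdiff
        have : μ w * v i (0 + 1) w ≤ μ u * v i (0 + 1) u := by
          have h2 : PhiN Part μ v (fun _ => 0) d' ≤ PhiN Part μ v (fun _ => 0) d := hLle
          -- hdiff : PhiN d' - PhiN d = μ w * v i (0+1) w - μ u * v i (0+1) u
          linarith [hdiff, h2]
        norm_num at this ⊢
        linarith
      · -- contested alternative : dominated by SSD1
        have h2 : 2 ≤ mcount Part d w + 1 := by omega
        exact ssd1' hμ_pos hPart hv_dec hSSD1 hπ (hsub hu) hw h2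
  · -- coverage maximality
    intro s' h
    rw [hdcnt]
    exact hsmaxbest s' h

end SG

namespace SG
open Finset SGaux SGaux2

variable {N Ω : Type} [Fintype N] [DecidableEq N] [Fintype Ω] [DecidableEq Ω]
variable {Part : N → Finset (Finset Ω)} {μ : Ω → ℝ} {c : N → ℕ → ℝ} {v : N → ℕ → Ω → ℝ}
variable {K : N → ℕ}

lemma climb
    (hPart : ∀ i, IsPartition (Part i)) (hμ_pos : ∀ ω, 0 < μ ω)
    (hc_mono : ∀ i k, c i k ≤ c i (k + 1))
    (hc_convex : ∀ i k, c i (k + 1) - c i k ≤ c i (k + 2) - c i (k + 1))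
    (hv_dec : ∀ i m ω, v i (m + 1) ω ≤ v i m ω)
    (hSSD1 : ∀ i, ∀ π ∈ Part i, ∀ ω ∈ π, ∀ ω' ∈ π,
      (μ ω' / ∑ x ∈ π, μ x) * v i 2 ω' ≤ (μ ω / ∑ x ∈ π, μ x) * v i 1 ω)
    (hSSD2 : ∀ i, ∀ π ∈ Part i, ∀ ω ∈ π,
      c i (K i) - c i (K i - 1) ≤ (μ ω / ∑ x ∈ π, μ x) * v i 1 ω) :
    ∀ (D : ℕ) (κ : N → Finset Ω → ℕ), (∀ i, ∀ π ∈ Part i, κ i π ≤ K i) →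
      (∑ i : N, ∑ π ∈ Part i, (K i - κ i π)) = D →
      ∀ s, NEk Part μ c v κ s →
      ∃ s', NEk Part μ c v (fun i _ => K i) s' ∧ countP Part s ≤ countP Part s' := by
  intro D
  induction D with
  | zero =>
    intro κ hκK hsum s hNE
    have heq : ∀ i, ∀ π ∈ Part i, κ i π = K i := by
      intro i π hπ
      have h1 := (Finset.sum_eq_zero_iff.mp hsum) i (Finset.mem_univ i)
      have h2 := (Finset.sum_eq_zero_iff.mp h1) π hπ
      have h3 := hκK i π hπ
      omega
    refine ⟨s, ⟨?_, ?_⟩, le_refl _⟩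
    · intro i π hπ
      obtain ⟨h1, h2⟩ := hNE.1 i π hπ
      refine ⟨h1, ?_⟩
      show (s i π).card ≤ K i
      rw [← heq i π hπ]; exact h2
    · intro i π hπ T hT hTc
      have hTc' : T.card ≤ K i := hTc
      exact hNE.2 i π hπ T hT (by rw [heq i π hπ]; exact hTc')
  | succ D ihD =>
    intro κ hκK hsum s hNE
    have hex : ∃ p, ∃ π0 ∈ Part p, κ p π0 < K p := by
      by_contra hno
      push_neg at hno
      have h0 : (∑ i : N, ∑ π ∈ Part i, (K i - κ i π)) = 0 :=
        Finset.sum_eq_zero (fun i _ => Finset.sum_eq_zero (fun π hπ => by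
          have := hno i π hπ; omega))
      omega
    obtain ⟨p, π0, hπ0, hlt⟩ := hex
    obtain ⟨s', hNE', hcnt'⟩ := addslot hPart hμ_pos hc_mono hc_convex hv_dec hSSD1 hSSD2
      κ hκK hπ0 hlt hNE
    set κ' : N → Finset Ω → ℕ := fun i π => if i = p ∧ π = π0 then κ p π0 + 1 else κ i π
      with hκ'def
    have hκ'pp : κ' p π0 = κ p π0 + 1 := by rw [hκ'def]; simp
    have hκ'ne : ∀ i π, (i ≠ p ∨ π ≠ π0) → κ' i π = κ i π := by
      intro i π h
      rw [hκ'def]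
      simp only
      rw [if_neg (by tauto)]
    have hκ'K : ∀ i, ∀ π ∈ Part i, κ' i π ≤ K i := by
      intro i π hπ
      by_cases h : i = p ∧ π = π0
      · obtain ⟨rfl, rfl⟩ := h
        rw [hκ'pp]; omega
      · rw [hκ'ne i π (by tauto)]
        exact hκK i π hπ
    have hsum' : (∑ i : N, ∑ π ∈ Part i, (K i - κ' i π)) = D := by
      have hinner : ∀ i, i ≠ p →
          (∑ π ∈ Part i, (K i - κ' i π)) = ∑ π ∈ Part i, (K i - κ i π) := by
        intro i hi
        apply Finset.sum_congr rfl
        intro π _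
        rw [hκ'ne i π (Or.inl hi)]
      have hp : (∑ π ∈ Part p, (K p - κ' p π)) + 1 = ∑ π ∈ Part p, (K p - κ p π) := by
        rw [← Finset.sum_erase_add (Part p) _ hπ0, ← Finset.sum_erase_add (Part p)
          (fun π => K p - κ p π) hπ0]
        have he : (∑ π ∈ (Part p).erase π0, (K p - κ' p π)) =
            ∑ π ∈ (Part p).erase π0, (K p - κ p π) := by
          apply Finset.sum_congr rfl
          intro π hπ
          rw [hκ'ne p π (Or.inr (Finset.ne_of_mem_erase hπ))]
        rw [he, hκ'pp]
        omega
      rw [← Finset.sum_erase_add Finset.univ _ (Finset.mem_univ p)] at hsum ⊢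
      have he2 : (∑ i ∈ Finset.univ.erase p, ∑ π ∈ Part i, (K i - κ' i π)) =
          ∑ i ∈ Finset.univ.erase p, ∑ π ∈ Part i, (K i - κ i π) := by
        apply Finset.sum_congr rfl
        intro i hi
        exact hinner i (Finset.ne_of_mem_erase hi)
      rw [he2]
      omega
    obtain ⟨s'', hNE'', hcnt''⟩ := ihD κ' hκ'K hsum' s' hNE'
    exact ⟨s'', hNE'', le_trans hcnt' hcnt''⟩

theorem main_result
    (hPart : ∀ i, IsPartition (Part i)) (hμ_pos : ∀ ω, 0 < μ ω)
    (hc_mono : ∀ i k, c i k ≤ c i (k + 1))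
    (hc_convex : ∀ i k, c i (k + 1) - c i k ≤ c i (k + 2) - c i (k + 1))
    (hv_dec : ∀ i m ω, v i (m + 1) ω ≤ v i m ω)
    (hSSD1 : ∀ i, ∀ π ∈ Part i, ∀ ω ∈ π, ∀ ω' ∈ π,
      (μ ω' / ∑ x ∈ π, μ x) * v i 2 ω' ≤ (μ ω / ∑ x ∈ π, μ x) * v i 1 ω)
    (hSSD2 : ∀ i, ∀ π ∈ Part i, ∀ ω ∈ π,
      c i (K i) - c i (K i - 1) ≤ (μ ω / ∑ x ∈ π, μ x) * v i 1 ω) :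
    ∃ s : N → Finset Ω → Finset Ω, IsNash Part K μ c v s ∧
      ∀ s' : N → Finset Ω → Finset Ω, ValidStrat Part K s' →
        countP Part s' ≤ countP Part s := by
  obtain ⟨κ₀, d, hκ₀K, hdval, hdopt, hdbest⟩ :=
    base_exists hPart hμ_pos hc_mono hc_convex hv_dec hSSD1 hSSD2
  obtain ⟨s, hNEs, hcnt⟩ := climb hPart hμ_pos hc_mono hc_convex hv_dec hSSD1 hSSD2
    (∑ i : N, ∑ π ∈ Part i, (K i - κ₀ i π)) κ₀ hκ₀K rfl d ⟨hdval, hdopt⟩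
  refine ⟨s, ?_, ?_⟩
  · have hvalstrat : ValidStrat Part K s := fun i => fun π hπ => hNEs.1 i π hπ
    exact isNash_of_cellOpt hPart K s hvalstrat
      (fun i π hπ T hT hTc => hNEs.2 i π hπ T hT hTc)
  · intro s' hs'
    exact le_trans (hdbest s' hs') hcnt

end SG
/-- Every search game with solitary-search dominant payoffs admits a
location-maximizing pure Nash equilibrium: an equilibrium `s` such that the
number of locations searched under `s` is at least the number of locations
searched under any other valid pure profile. -/
theorem exists_location_maximizing_equilibrium
    {N Ω : Type} [Fintype N] [DecidableEq N] [Fintype Ω] [DecidableEq Ω]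
    (Part : N → Finset (Finset Ω)) (K : N → ℕ) (μ : Ω → ℝ)
    (c : N → ℕ → ℝ) (v : N → ℕ → Ω → ℝ)
    (hPart : ∀ i, IsPartition (Part i))
    (hμ_pos : ∀ ω, 0 < μ ω) (hμ_sum : ∑ ω, μ ω = 1)
    (hc0 : ∀ i, c i 0 = 0)
    (hc_mono : ∀ i k, c i k ≤ c i (k + 1))
    (hc_convex : ∀ i k, c i (k + 1) - c i k ≤ c i (k + 2) - c i (k + 1))
    (hv_nonneg : ∀ i m ω, 0 ≤ v i m ω)
    (hv_dec : ∀ i m ω, v i (m + 1) ω ≤ v i m ω)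
    -- solitary-search dominance
    (hSSD1 : ∀ i, ∀ π ∈ Part i, ∀ ω ∈ π, ∀ ω' ∈ π,
      (μ ω' / ∑ x ∈ π, μ x) * v i 2 ω' ≤ (μ ω / ∑ x ∈ π, μ x) * v i 1 ω)
    (hSSD2 : ∀ i, ∀ π ∈ Part i, ∀ ω ∈ π,
      c i (K i) - c i (K i - 1) ≤ (μ ω / ∑ x ∈ π, μ x) * v i 1 ω) :
    ∃ s : N → Finset Ω → Finset Ω, IsNash Part K μ c v s ∧
      ∀ s' : N → Finset Ω → Finset Ω, ValidStrat Part K s' →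
        ((Finset.univ : Finset Ω).filter fun ω => 1 ≤ mcount Part s' ω).card ≤
        ((Finset.univ : Finset Ω).filter fun ω => 1 ≤ mcount Part s ω).card := by
  obtain ⟨s, hNash, hbest⟩ :=
    SG.main_result hPart hμ_pos hc_mono hc_convex hv_dec hSSD1 hSSD2
  exact ⟨s, hNash, hbest⟩
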